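/- arXiv:1402.1618 — 5 statements merged into one kernel-verified Lean document; each statement's English description precedes it below -/
import Mathlib

section
/- Let G and M be compact second countable groups and suppose there exist an m_G-conull Borel set X ⊆ G, an (m_G × m_G)-conull Borel set Z ⊆ X × X, and Borel measurable maps α, β : X → M such that α(x)β(y) = α(x')β(y') whenever (x,y) and (x',y') belong to Z and satisfy xy = x'y'. Then there exist a continuous homomorphism π : G → M and elements s, t ∈ M such that α(x) = s·π(x) for m_G-almost every x ∈ G and β(y) = π(y)·t for m_G-almost every y ∈ G. -/
noncomputable section

/-- A compact group `S` together with a continuous surjective homomorphism onto `L`. -/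
structure CompactGroupOver (L : Type*) [Group L] [TopologicalSpace L] where
  S : Type
  [grp : Group S]
  [top : TopologicalSpace S]
  [tgrp : IsTopologicalGroup S]
  [cpt : CompactSpace S]
  p : S →* L
  pcont : Continuous p
  psurj : Function.Surjective p

attribute [instance] CompactGroupOver.grp CompactGroupOver.top
  CompactGroupOver.tgrp CompactGroupOver.cpt

open MeasureTheory Set Pointwise Function

noncomputable instance : MeasurableSpace Circle := borel Circle
instance : BorelSpace Circle := ⟨rfl⟩

/-- A closed interval (closed arc) in the circle group `𝕋 = Circle`. -/
def IsClosedArc (I : Set Circle) : Prop :=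
  ∃ a b : ℝ, a ≤ b ∧ b - a ≤ 2 * Real.pi ∧ I = ⇑Circle.exp '' Set.Icc a b

/-- The twisted torus `𝕋 ⋊ {-1,1}`, realized on `Circle × ℤˣ` with multiplication
`(a,ε)(b,δ) = (a·b^ε, εδ)`. -/
def TT : Type := Circle × ℤˣ

namespace TT

instance instTopologicalSpace : TopologicalSpace TT :=
  inferInstanceAs (TopologicalSpace (Circle × ℤˣ))
instance instMeasurableSpace : MeasurableSpace TT :=
  inferInstanceAs (MeasurableSpace (Circle × ℤˣ))
instance instCompactSpace : CompactSpace TT :=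
  inferInstanceAs (CompactSpace (Circle × ℤˣ))
instance instT2Space : T2Space TT :=
  inferInstanceAs (T2Space (Circle × ℤˣ))

/-- The circle component. -/
def circ (x : TT) : Circle := Prod.fst x

/-- The sign component. -/
def sgn (x : TT) : ℤˣ := Prod.snd x

/-- Build an element of `𝕋 ⋊ {-1,1}` from its components. -/
def mk' (a : Circle) (e : ℤˣ) : TT := ((a, e) : Circle × ℤˣ)

instance instMul : Mul TT :=
  ⟨fun x y => mk' (x.circ * y.circ ^ ((x.sgn : ℤˣ) : ℤ)) (x.sgn * y.sgn)⟩
instance instOne : One TT := ⟨mk' 1 1⟩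
instance instInv : Inv TT :=
  ⟨fun x => mk' (x.circ ^ (-((x.sgn : ℤˣ) : ℤ))) x.sgn⟩

@[simp] lemma mul_circ (x y : TT) :
    (x * y).circ = x.circ * y.circ ^ ((x.sgn : ℤˣ) : ℤ) := rfl
@[simp] lemma mul_sgn (x y : TT) : (x * y).sgn = x.sgn * y.sgn := rfl
@[simp] lemma one_circ : (1 : TT).circ = 1 := rfl
@[simp] lemma one_sgn : (1 : TT).sgn = 1 := rfl
@[simp] lemma inv_circ (x : TT) : (x⁻¹).circ = x.circ ^ (-((x.sgn : ℤˣ) : ℤ)) := rfl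
@[simp] lemma inv_sgn (x : TT) : (x⁻¹).sgn = x.sgn := rfl

protected lemma ext {x y : TT} (h1 : x.circ = y.circ) (h2 : x.sgn = y.sgn) : x = y :=
  Prod.ext h1 h2

instance instGroup : Group TT where
  mul_assoc x y z := by
    refine TT.ext ?_ ?_
    · simp [mul_zpow, ← zpow_mul, mul_assoc]
      rw [mul_comm ((x.sgn : ℤˣ) : ℤ)]
    · simp [mul_assoc]
  one_mul x := by refine TT.ext ?_ ?_ <;> simp
  mul_one x := by refine TT.ext ?_ ?_ <;> simp
  inv_mul_cancel x := by
    refine TT.ext ?_ ?_ <;> simp [← zpow_mul, Int.units_mul_self]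

end TT

/-- The subset `I ⋊ {-1,1}` of `𝕋 ⋊ {-1,1}` attached to a subset `I ⊆ 𝕋`. -/
def TT.lift (I : Set Circle) : Set TT := {x : TT | x.circ ∈ I}

section Defs

variable {G : Type*}

/-- `(A,B)` is a critical pair: both sets are Borel of positive measure and
`m(AB) = min(1, m(A)+m(B))`. -/
def IsCriticalPair [Group G] [MeasurableSpace G] (m : Measure G) (A B : Set G) : Prop :=
  MeasurableSet A ∧ MeasurableSet B ∧ 0 < m A ∧ 0 < m B ∧
    m (A * B) = min 1 (m A + m B)

/-- `(A,B)` is a sub-critical pair: both sets are Borel of positive measure and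
`m(AB) < min(1, m(A)+m(B))`. -/
def IsSubCriticalPair [Group G] [MeasurableSpace G] (m : Measure G) (A B : Set G) : Prop :=
  MeasurableSet A ∧ MeasurableSet B ∧ 0 < m A ∧ 0 < m B ∧
    m (A * B) < min 1 (m A + m B)

/-- `(S,T)` is a sub-critical pair in the open subgroup `U` with respect to the Haar
probability measure of `U`; in terms of the ambient Haar probability measure `m` this
reads `m(ST) < min (m U) (m S + m T)`, since the Haar probability measure of `U` is
`m(· ∩ U)/m(U)`. -/
def SubCriticalInOpen [Group G] [MeasurableSpace G] (m : Measure G) (U : Subgroup G)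
    (S T : Set G) : Prop :=
  MeasurableSet S ∧ MeasurableSet T ∧ S ⊆ (U : Set G) ∧ T ⊆ (U : Set G) ∧
    0 < m S ∧ 0 < m T ∧ m (S * T) < min (m (U : Set G)) (m S + m T)

/-- `(A,B)` is almost sub-critical in the open normal subgroup `U`: there are conull
Borel subsets `A' ⊆ A`, `B' ⊆ B` and `p, q ∈ G` such that `(p⁻¹A' ∩ U, B'q⁻¹ ∩ U)` is
a sub-critical pair in `U`. -/
def AlmostSubCriticalIn [Group G] [MeasurableSpace G] (m : Measure G) (U : Subgroup G)
    (A B : Set G) : Prop :=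
  ∃ A' B' : Set G, MeasurableSet A' ∧ MeasurableSet B' ∧ A' ⊆ A ∧ B' ⊆ B ∧
    m (A \ A') = 0 ∧ m (B \ B') = 0 ∧
    ∃ p q : G, SubCriticalInOpen m U ((p⁻¹ • A') ∩ (U : Set G))
      (((· * q⁻¹) '' B') ∩ (U : Set G))

/-- `(A,B)` is locally sub-critical: it is almost sub-critical in some open normal
subgroup of `G`. -/
def LocallySubCritical [Group G] [TopologicalSpace G] [MeasurableSpace G]
    (m : Measure G) (A B : Set G) : Prop :=
  ∃ U : Subgroup G, U.Normal ∧ IsOpen (U : Set G) ∧ AlmostSubCriticalIn m U A B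

/-- `(m_G)_x^N`: the pushforward, under right multiplication by `x`, of the Haar
probability measure `μN` of the closed subgroup `N`, viewed as a measure on `G`. -/
def fiberMeasure [Group G] [MeasurableSpace G] (N : Subgroup G)
    (μN : Measure ↥N) (x : G) : Measure G :=
  Measure.map (fun n : ↥N => (n : G) * x) μN

/-- `(A,B)` is critical with respect to the closed normal subgroup `N` (with Haar
probability measure `μN`). -/
def CriticalWrt [Group G] [MeasurableSpace G] (m : Measure G) (N : Subgroup G)
    (μN : Measure ↥N) (A B : Set G) : Prop :=
  ∃ X : Set G, MeasurableSet X ∧ m Xᶜ = 0 ∧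
    ∃ Z : Set (G × G), MeasurableSet Z ∧ (m.prod m) Zᶜ = 0 ∧ Z ⊆ X ×ˢ X ∧
      (∀ x ∈ X, fiberMeasure N μN x A = m A) ∧
      (∀ y ∈ X, fiberMeasure N μN y B = m B) ∧
      ∀ p ∈ Z, fiberMeasure N μN (p.1 * p.2) (A * B)
        = fiberMeasure N μN p.1 A + fiberMeasure N μN p.2 B

/-- `C⁺ ⊆ G/U`: the set of cosets of `U` meeting `C`. -/
def plusSet [Group G] (U : Subgroup G) (C : Set G) : Set (G ⧸ U) :=
  QuotientGroup.mk '' C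

/-- `C ∩ Ux`, the part of `C` lying over the coset `x ∈ G/U`. -/
def cosetFiber [Group G] (U : Subgroup G) (C : Set G) (x : G ⧸ U) : Set G :=
  C ∩ QuotientGroup.mk ⁻¹' {x}

/-- `C` is `U`-balanced: the identity coset belongs to `C⁺` and every coset in `C⁺`
carries a positive measure part of `C`. -/
def UBalanced [Group G] [MeasurableSpace G] (m : Measure G) (U : Subgroup G)
    (C : Set G) : Prop :=
  QuotientGroup.mk (1 : G) ∈ plusSet U C ∧
    ∀ x ∈ plusSet U C, 0 < m (cosetFiber U C x)

/-- A set is regular if it equals the closure of its interior. -/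
def IsRegularSet {X : Type*} [TopologicalSpace X] (I : Set X) : Prop :=
  I = closure (interior I)

/-- `(I,J)` is left stable: `xJ ⊆ IJ` implies `x ∈ I`. -/
def IsLeftStable [Group G] (I J : Set G) : Prop :=
  ∀ x : G, (x * ·) '' J ⊆ I * J → x ∈ I

/-- `(I,J)` is right stable: `Ix ⊆ IJ` implies `x ∈ J`. -/
def IsRightStable [Group G] (I J : Set G) : Prop :=
  ∀ x : G, (· * x) '' I ⊆ I * J → x ∈ J

/-- `(I,J)` is stable if it is both left and right stable. -/
def IsStablePair [Group G] (I J : Set G) : Prop :=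
  IsLeftStable I J ∧ IsRightStable I J

end Defs

/-- A compact connected group `N` (with Haar probability measure `mN`) is a Kneser
group: every critical pair in `N` is covered by translates of closed intervals pulled
back under a continuous surjective homomorphism onto the circle group (here `mT`
denotes the Haar probability measure of the circle group). -/
def IsKneserGroup {N : Type*} [Group N] [TopologicalSpace N] [MeasurableSpace N]
    (mN : Measure N) (mT : Measure Circle) : Prop :=
  ∀ C D : Set N, IsCriticalPair mN C D →
    ∃ ξ : N →* Circle, Continuous ξ ∧ Function.Surjective ξ ∧
      ∃ I J : Set Circle, IsClosedArc I ∧ IsClosedArc J ∧ mN (C * D) = mT (I * J) ∧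
        ∃ s t : Circle, C ⊆ ⇑ξ ⁻¹' ((s * ·) '' I) ∧ D ⊆ ⇑ξ ⁻¹' ((· * t) '' J)

end
open MeasureTheory Set Pointwise Function

set_option linter.unusedSectionVars false

section Aux

variable {G : Type*} [Group G] [TopologicalSpace G] [IsTopologicalGroup G] [CompactSpace G]
  [SecondCountableTopology G] [T2Space G] [MeasurableSpace G] [BorelSpace G]

theorem aux_prob_eq_haar (mG : Measure G) [mG.IsHaarMeasure] [IsProbabilityMeasure mG]
    (μ' : Measure G) [μ'.IsMulLeftInvariant] [IsProbabilityMeasure μ'] : μ' = mG := by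
  have h := Measure.isMulInvariant_eq_smul_of_compactSpace μ' mG
  have hu := congrArg (fun m : Measure G => m Set.univ) h
  simp only [measure_univ, Measure.smul_apply, smul_eq_mul, mul_one, ENNReal.smul_def] at hu
  have : μ'.haarScalarFactor mG = 1 := by
    have := hu.symm
    exact_mod_cast this
  rw [h, this, one_smul]

theorem aux_rightInv (mG : Measure G) [mG.IsHaarMeasure] [IsProbabilityMeasure mG] :
    mG.IsMulRightInvariant := by
  constructor
  intro g
  haveI : IsProbabilityMeasure (Measure.map (· * g) mG) :=
    Measure.isProbabilityMeasure_map (measurable_mul_const g).aemeasurable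
  exact aux_prob_eq_haar mG _

theorem aux_invInv (mG : Measure G) [mG.IsHaarMeasure] [IsProbabilityMeasure mG] :
    mG.IsInvInvariant := by
  haveI := aux_rightInv mG
  haveI : IsProbabilityMeasure mG.inv := by
    rw [Measure.inv]
    exact Measure.isProbabilityMeasure_map measurable_inv.aemeasurable
  exact ⟨aux_prob_eq_haar mG mG.inv⟩

end Aux


section MP

variable {G : Type*} [Group G] [TopologicalSpace G] [IsTopologicalGroup G] [CompactSpace G]
  [SecondCountableTopology G] [T2Space G] [MeasurableSpace G] [BorelSpace G]

/-- fst is measure preserving when second factor is a probability measure -/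
theorem aux_mp_fst {α β : Type*} [MeasurableSpace α] [MeasurableSpace β]
    (μ : Measure α) (ν : Measure β) [SFinite μ] [SFinite ν] [IsProbabilityMeasure ν] :
    MeasurePreserving (Prod.fst : α × β → α) (μ.prod ν) μ :=
  ⟨measurable_fst, by simp [Measure.map_fst_prod, measure_univ]⟩

theorem aux_mp_snd {α β : Type*} [MeasurableSpace α] [MeasurableSpace β]
    (μ : Measure α) (ν : Measure β) [SFinite μ] [SFinite ν] [IsProbabilityMeasure μ] :
    MeasurePreserving (Prod.snd : α × β → β) (μ.prod ν) ν :=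
  ⟨measurable_snd, by simp [Measure.map_snd_prod, measure_univ]⟩

/-- skew: parameter in the first slot, measure-preserving in the second. -/
theorem aux_mp_skew {α : Type*} [MeasurableSpace α] (μ : Measure α) [SFinite μ]
    [IsProbabilityMeasure μ] (mG : Measure G) [SFinite mG]
    {f : α → G → G} (hf : Measurable (uncurry f)) (h : ∀ a, MeasurePreserving (f a) mG mG) :
    MeasurePreserving (fun p : α × G => f p.1 p.2) (μ.prod mG) mG := by
  have h1 : MeasurePreserving (fun p : α × G => (p.1, f p.1 p.2)) (μ.prod mG) (μ.prod mG) :=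
    (MeasurePreserving.id μ).skew_product hf (Filter.Eventually.of_forall fun a => (h a).map_eq)
  exact (aux_mp_snd μ mG).comp h1

/-- maps of the form `(x, z) ↦ (f x z, z)` with `f · z` measure preserving. -/
theorem aux_mp_pair_fst (mG : Measure G) [SFinite mG] [IsProbabilityMeasure mG]
    {f : G → G → G} (hf : Measurable (uncurry f))
    (h : ∀ z, MeasurePreserving (fun y => f y z) mG mG) :
    MeasurePreserving (fun p : G × G => (f p.1 p.2, p.2)) (mG.prod mG) (mG.prod mG) := by
  have h1 : MeasurePreserving (fun q : G × G => (q.1, f q.2 q.1)) (mG.prod mG) (mG.prod mG) :=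
    (MeasurePreserving.id mG).skew_product (g := fun z y => f y z)
      (hf.comp measurable_swap) (Filter.Eventually.of_forall fun z => (h z).map_eq)
  have h2 := (Measure.measurePreserving_swap (μ := mG) (ν := mG)).comp
    (h1.comp (Measure.measurePreserving_swap (μ := mG) (ν := mG)))
  exact h2

/-- multiplication is measure preserving from the product. -/
theorem aux_mp_mul (mG : Measure G) [mG.IsHaarMeasure] [IsProbabilityMeasure mG] :
    MeasurePreserving (fun p : G × G => p.1 * p.2) (mG.prod mG) mG :=
  aux_mp_skew mG mG measurable_mul fun a => measurePreserving_mul_left mG a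

/-- `(u,(y,z)) ↦ (u*y, z)` is measure preserving. -/
theorem aux_mp_merge (mG : Measure G) [mG.IsHaarMeasure] [IsProbabilityMeasure mG] :
    MeasurePreserving (fun p : G × G × G => (p.1 * p.2.1, p.2.2))
      (mG.prod (mG.prod mG)) (mG.prod mG) := by
  have hassoc : MeasurePreserving (MeasurableEquiv.prodAssoc.symm : G × G × G ≃ᵐ (G × G) × G)
      (mG.prod (mG.prod mG)) ((mG.prod mG).prod mG) :=
    (measurePreserving_prodAssoc mG mG mG).symm _
  have hmap : MeasurePreserving (Prod.map (fun q : G × G => q.1 * q.2) (id : G → G))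
      ((mG.prod mG).prod mG) (mG.prod mG) :=
    (aux_mp_mul mG).prod (MeasurePreserving.id mG)
  exact hmap.comp hassoc

end MP

section MP2

variable {G : Type*} [Group G] [TopologicalSpace G] [IsTopologicalGroup G] [CompactSpace G]
  [SecondCountableTopology G] [T2Space G] [MeasurableSpace G] [BorelSpace G]

/-- `(u,(y,z)) ↦ (c * (u*y) * z⁻¹, z)` is measure preserving. -/
theorem aux_mp_T (mG : Measure G) [mG.IsHaarMeasure] [IsProbabilityMeasure mG] (c : G) :
    MeasurePreserving (fun p : G × G × G => (c * (p.1 * p.2.1) * p.2.2⁻¹, p.2.2))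
      (mG.prod (mG.prod mG)) (mG.prod mG) := by
  haveI := aux_rightInv mG
  have h1 : MeasurePreserving (fun q : G × G => (c * q.1 * q.2⁻¹, q.2)) (mG.prod mG) (mG.prod mG) :=
    aux_mp_pair_fst mG (f := fun w z => c * w * z⁻¹)
      (((measurable_const.mul measurable_fst).mul measurable_snd.inv))
      (fun z => (measurePreserving_mul_right mG z⁻¹).comp (measurePreserving_mul_left mG c))
  exact h1.comp (aux_mp_merge mG)

/-- `(u,(y,z)) ↦ (u * y * z⁻¹, z)` is measure preserving. -/
theorem aux_mp_T4 (mG : Measure G) [mG.IsHaarMeasure] [IsProbabilityMeasure mG] :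
    MeasurePreserving (fun p : G × G × G => (p.1 * p.2.1 * p.2.2⁻¹, p.2.2))
      (mG.prod (mG.prod mG)) (mG.prod mG) := by
  haveI := aux_rightInv mG
  have h1 : MeasurePreserving (fun q : G × G => (q.1 * q.2⁻¹, q.2)) (mG.prod mG) (mG.prod mG) :=
    aux_mp_pair_fst mG (f := fun w z => w * z⁻¹)
      (measurable_fst.mul measurable_snd.inv)
      (fun z => measurePreserving_mul_right mG z⁻¹)
  exact h1.comp (aux_mp_merge mG)

/-- `(u,(y,z)) ↦ (u, u * y * z⁻¹)` is measure preserving. -/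
theorem aux_mp_phi (mG : Measure G) [mG.IsHaarMeasure] [IsProbabilityMeasure mG] :
    MeasurePreserving (fun p : G × G × G => (p.1, p.1 * p.2.1 * p.2.2⁻¹))
      (mG.prod (mG.prod mG)) (mG.prod mG) := by
  haveI := aux_rightInv mG
  haveI := aux_invInv mG
  refine (MeasurePreserving.id mG).skew_product (g := fun u (q : G × G) => u * q.1 * q.2⁻¹)
    ?_ (Filter.Eventually.of_forall fun u => ?_)
  · show Measurable fun p : G × G × G => p.1 * p.2.1 * p.2.2⁻¹
    fun_prop
  · exact (aux_mp_skew mG mG (f := fun a x => u * a * x⁻¹)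
      ((measurable_const.mul measurable_fst).mul measurable_snd.inv)
      (fun a => (measurePreserving_mul_left mG (u * a)).comp (Measure.measurePreserving_inv mG))).map_eq

/-- `(x,u) ↦ (x * u⁻¹, u)` is measure preserving. -/
theorem aux_mp_xmul (mG : Measure G) [mG.IsHaarMeasure] [IsProbabilityMeasure mG] :
    MeasurePreserving (fun q : G × G => (q.1 * q.2⁻¹, q.2)) (mG.prod mG) (mG.prod mG) := by
  haveI := aux_rightInv mG
  exact aux_mp_pair_fst mG (f := fun w z => w * z⁻¹)
    (measurable_fst.mul measurable_snd.inv)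
    (fun z => measurePreserving_mul_right mG z⁻¹)

end MP2

set_option maxHeartbeats 1000000

/-- Proposition 2: measurable maps `α, β` on a conull set which
satisfy the multiplicative cocycle identity on a conull set of pairs are almost
everywhere a left, resp. right, translate of a continuous homomorphism. -/
theorem cocycle_maps_are_translates_of_homomorphism
    {G M : Type*}
    [Group G] [TopologicalSpace G] [IsTopologicalGroup G] [CompactSpace G]
    [SecondCountableTopology G] [T2Space G] [MeasurableSpace G] [BorelSpace G]
    [Group M] [TopologicalSpace M] [IsTopologicalGroup M] [CompactSpace M]
    [SecondCountableTopology M] [T2Space M] [MeasurableSpace M] [BorelSpace M]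
    (mG : Measure G) [mG.IsHaarMeasure] [IsProbabilityMeasure mG]
    (X : Set G) (hX : MeasurableSet X) (hXco : mG Xᶜ = 0)
    (Z : Set (G × G)) (hZ : MeasurableSet Z) (hZco : (mG.prod mG) Zᶜ = 0)
    (hZX : Z ⊆ X ×ˢ X)
    (α β : G → M)
    (hα : Measurable fun x : X => α ↑x) (hβ : Measurable fun x : X => β ↑x)
    (hco : ∀ p q : G × G, p ∈ Z → q ∈ Z → p.1 * p.2 = q.1 * q.2 →
      α p.1 * β p.2 = α q.1 * β q.2) :
    ∃ π : G →* M, Continuous π ∧ ∃ s t : M,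
      (∀ᵐ x ∂mG, α x = s * π x) ∧ (∀ᵐ y ∂mG, β y = π y * t) := by
  classical
  haveI := aux_rightInv mG
  haveI := aux_invInv mG
  haveI : (ae mG).NeBot := MeasureTheory.ae_neBot.mpr (IsProbabilityMeasure.ne_zero mG)
  -- measurable extensions of α and β
  set aa : G → M := fun g => if h : g ∈ X then α g else 1 with haa_def
  set bb : G → M := fun g => if h : g ∈ X then β g else 1 with hbb_def
  have haam : Measurable aa := Measurable.dite hα measurable_const hX
  have hbbm : Measurable bb := Measurable.dite hβ measurable_const hX
  have haaX : ∀ {x : G}, x ∈ X → aa x = α x := fun hx => dif_pos hx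
  have hbbX : ∀ {x : G}, x ∈ X → bb x = β x := fun hx => dif_pos hx
  have hco' : ∀ p q : G × G, p ∈ Z → q ∈ Z → p.1 * p.2 = q.1 * q.2 →
      aa p.1 * bb p.2 = aa q.1 * bb q.2 := by
    intro p q hp hq hpq
    have hpX := hZX hp; have hqX := hZX hq
    rw [haaX hpX.1, hbbX hpX.2, haaX hqX.1, hbbX hqX.2]
    exact hco p q hp hq hpq
  -- the cocycle difference function
  set A : G → G → M := fun g u => aa (g * u) * (aa u)⁻¹ with hA_def
  have hAm2 : Measurable (fun p : G × G => A p.1 p.2) :=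
    (haam.comp measurable_mul).mul ((haam.comp measurable_snd).inv)
  have hAm : ∀ g, Measurable (A g) := fun g =>
    (haam.comp (measurable_const_mul g)).mul haam.inv
  -- Step 1: for every g, `A g` takes a.e. the same value at a.e. pair of points
  have step1 : ∀ g : G, ∀ᵐ p ∂(mG.prod mG), A g p.1 = A g p.2 := by
    intro g
    have hT1 : MeasurePreserving (fun p : G × G × G => (g * p.1, p.2.1))
        (mG.prod (mG.prod mG)) (mG.prod mG) :=
      (measurePreserving_mul_left mG g).prod (aux_mp_fst mG mG)
    have hT3 : MeasurePreserving (fun p : G × G × G => (p.1, p.2.1))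
        (mG.prod (mG.prod mG)) (mG.prod mG) :=
      (MeasurePreserving.id mG).prod (aux_mp_fst mG mG)
    have hT2 := aux_mp_T mG g
    have hT4 := aux_mp_T4 mG
    have hΦ := aux_mp_phi mG
    have hmem : ∀ (T : G × G × G → G × G), MeasurePreserving T (mG.prod (mG.prod mG)) (mG.prod mG) →
        ∀ᵐ p ∂(mG.prod (mG.prod mG)), T p ∈ Z := by
      intro T hT
      have h0 : (mG.prod (mG.prod mG)) (T ⁻¹' Zᶜ) = 0 :=
        hT.quasiMeasurePreserving.preimage_null hZco
      rw [MeasureTheory.ae_iff]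
      exact h0
    have h1 := hmem _ hT1
    have h2 := hmem _ hT2
    have h3 := hmem _ hT3
    have h4 := hmem _ hT4
    have hstep : ∀ᵐ p ∂(mG.prod (mG.prod mG)), A g p.1 = A g (p.1 * p.2.1 * p.2.2⁻¹) := by
      filter_upwards [h1, h2, h3, h4] with p hp1 hp2 hp3 hp4
      have e1 : aa (g * p.1) * bb p.2.1 = aa (g * (p.1 * p.2.1) * p.2.2⁻¹) * bb p.2.2 :=
        hco' _ _ hp1 hp2 (by group)
      have e2 : aa p.1 * bb p.2.1 = aa (p.1 * p.2.1 * p.2.2⁻¹) * bb p.2.2 :=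
        hco' _ _ hp3 hp4 (by group)
      have key : ∀ a b c d e f : M, a * b = c * d → e * b = f * d → a * e⁻¹ = c * f⁻¹ := by
        intro a b c d e f k1 k2
        have ha : a = c * d * b⁻¹ := by rw [← k1]; group
        have he : e = f * d * b⁻¹ := by rw [← k2]; group
        rw [ha, he]; group
      have hk := key _ _ _ _ _ _ e1 e2
      have hrw : g * (p.1 * p.2.1 * p.2.2⁻¹) = g * (p.1 * p.2.1) * p.2.2⁻¹ := by group
      simp only [hA_def, hrw]
      exact hk
    have m1 : StronglyMeasurable (fun q : G × G => A g q.1) :=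
      ((hAm g).comp measurable_fst).stronglyMeasurable
    have m2 : StronglyMeasurable (fun q : G × G => A g q.2) :=
      ((hAm g).comp measurable_snd).stronglyMeasurable
    have hTm : MeasurableSet {q : G × G | A g q.1 = A g q.2} :=
      m1.measurableSet_eq_fun m2
    have hnull : (mG.prod mG) {q : G × G | A g q.1 = A g q.2}ᶜ = 0 := by
      rw [← hΦ.measure_preimage hTm.compl.nullMeasurableSet]
      have hpre : (fun p : G × G × G => (p.1, p.1 * p.2.1 * p.2.2⁻¹)) ⁻¹'
          {q : G × G | A g q.1 = A g q.2}ᶜ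
          = {p : G × G × G | ¬ (A g p.1 = A g (p.1 * p.2.1 * p.2.2⁻¹))} := rfl
      rw [hpre]
      exact MeasureTheory.ae_iff.mp hstep
    rw [MeasureTheory.ae_iff]
    simpa [Set.compl_setOf] using hnull
  -- Step 2: essential value of `A g`
  have uniq : ∀ {g : G} {m m' : M}, (∀ᵐ u ∂mG, A g u = m) → (∀ᵐ u ∂mG, A g u = m') → m = m' := by
    intro g m m' h1 h2
    obtain ⟨u, hu1, hu2⟩ := (h1.and h2).exists
    rw [← hu1, hu2]
  have hEx : ∀ g : G, ∃ m : M, ∀ᵐ u ∂mG, A g u = m := by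
    intro g
    obtain ⟨u₀, hu₀⟩ := (Measure.ae_ae_of_ae_prod (step1 g)).exists
    exact ⟨A g u₀, hu₀.mono fun v hv => hv.symm⟩
  set π0 : G → M := fun g => (hEx g).choose with hπ0_def
  have hπ0 : ∀ g, ∀ᵐ u ∂mG, A g u = π0 g := fun g => (hEx g).choose_spec
  -- Step 3: π0 is a homomorphism
  have hπ0_one : π0 1 = 1 := by
    refine uniq (hπ0 1) (Filter.Eventually.of_forall fun u => ?_)
    simp [hA_def]
  have hπ0_mul : ∀ g h : G, π0 (g * h) = π0 g * π0 h := by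
    intro g h
    have h3 : ∀ᵐ u ∂mG, A g (h * u) = π0 g :=
      (measurePreserving_mul_left mG h).quasiMeasurePreserving.ae (hπ0 g)
    refine uniq (hπ0 (g * h)) ?_
    filter_upwards [h3, hπ0 h] with u h1 h2
    rw [← h1, ← h2]
    simp only [hA_def]
    group
  have hπ0_inv : ∀ g : G, π0 g⁻¹ = (π0 g)⁻¹ := by
    intro g
    refine eq_inv_of_mul_eq_one_left ?_
    rw [← hπ0_mul, inv_mul_cancel, hπ0_one]
  -- Step 4: π0 is measurable
  have hπ0_meas : Measurable π0 := by
    intro t ht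
    have hs : MeasurableSet {p : G × G | A p.1 p.2 ∈ t} := hAm2 ht
    have hmm : Measurable fun g => mG (Prod.mk g ⁻¹' {p : G × G | A p.1 p.2 ∈ t}) :=
      measurable_measure_prodMk_left hs
    have heq : π0 ⁻¹' t = {g | mG {u | A g u ∈ t} = 1} := by
      ext g
      simp only [Set.mem_preimage, Set.mem_setOf_eq]
      have hmt : MeasurableSet {u : G | A g u ∈ t} := hAm g ht
      constructor
      · intro hgt
        have hae : ∀ᵐ u ∂mG, A g u ∈ t := (hπ0 g).mono fun u hu => hu ▸ hgt
        have h0 : mG {u : G | A g u ∈ t}ᶜ = 0 := by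
          rw [Set.compl_setOf]
          exact MeasureTheory.ae_iff.mp hae
        exact (prob_compl_eq_zero_iff hmt).mp h0
      · intro h1
        have hae : ∀ᵐ u ∂mG, A g u ∈ t := by
          rw [MeasureTheory.ae_iff]
          rw [← Set.compl_setOf (p := fun u => A g u ∈ t)]
          exact (prob_compl_eq_zero_iff hmt).mpr h1
        obtain ⟨u, hu1, hu2⟩ := ((hπ0 g).and hae).exists
        exact hu1 ▸ hu2
    rw [heq]
    exact hmm (measurableSet_singleton 1)
  -- Step 5: π0 is continuous
  have hπ0_cont : Continuous π0 := by
    have hcont1 : ContinuousAt π0 1 := by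
      rw [ContinuousAt, hπ0_one]
      intro V hV
      rw [Filter.mem_map]
      obtain ⟨W1, hW1o, hW11, hW1V⟩ := exists_open_nhds_one_mul_subset hV
      set W : Set M := W1 ∩ W1⁻¹ with hW_def
      have hWo : IsOpen W := hW1o.inter hW1o.inv
      have hW1 : (1 : M) ∈ W := ⟨hW11, by simpa using hW11⟩
      have hWWV : ∀ a b : M, a ∈ W → b ∈ W → a * b⁻¹ ∈ V := by
        intro a b ha hb
        exact hW1V (Set.mul_mem_mul ha.1 hb.2)
      obtain ⟨D, hDc, hDd⟩ := TopologicalSpace.exists_countable_dense M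
      have hcover : ∀ x : M, ∃ m ∈ D, x ∈ (· * m) '' W := by
        intro x
        have hUo : IsOpen ((fun w => w⁻¹ * x) '' W) :=
          ((Homeomorph.inv M).trans (Homeomorph.mulRight x)).isOpenMap W hWo
        have hUne : ((fun w => w⁻¹ * x) '' W).Nonempty := ⟨1⁻¹ * x, ⟨1, hW1, rfl⟩⟩
        obtain ⟨m, hmD, hmU⟩ := hDd.exists_mem_open hUo hUne
        obtain ⟨w, hw, rfl⟩ := hmU
        exact ⟨w⁻¹ * x, hmD, ⟨w, hw, by group⟩⟩
      have hpos : ∃ m ∈ D, 0 < mG (π0 ⁻¹' ((· * m) '' W)) := by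
        by_contra hcon
        push_neg at hcon
        have hall : ∀ m ∈ D, mG (π0 ⁻¹' ((· * m) '' W)) = 0 := fun m hm =>
          le_antisymm (hcon m hm) zero_le
        have huniv : (Set.univ : Set G) ⊆ ⋃ m ∈ D, π0 ⁻¹' ((· * m) '' W) := by
          intro x _
          obtain ⟨m, hmD, hxm⟩ := hcover (π0 x)
          exact Set.mem_biUnion hmD hxm
        have h0 : mG (⋃ m ∈ D, π0 ⁻¹' ((· * m) '' W)) = 0 := by
          rw [measure_biUnion_null_iff hDc]
          exact hall
        have := measure_mono (μ := mG) huniv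
        rw [h0] at this
        simp [measure_univ] at this
      obtain ⟨m, hmD, hmpos⟩ := hpos
      have hWmo : IsOpen ((· * m) '' W) := (Homeomorph.mulRight m).isOpenMap W hWo
      have hEm : MeasurableSet (π0 ⁻¹' ((· * m) '' W)) := hπ0_meas hWmo.measurableSet
      have hEE := MeasureTheory.Measure.div_mem_nhds_one_of_haar_pos mG (π0 ⁻¹' ((· * m) '' W)) hEm hmpos
      refine Filter.mem_of_superset hEE ?_
      rintro z hz
      rw [Set.mem_div] at hz
      obtain ⟨a, ha, b, hb, rfl⟩ := hz
      obtain ⟨wa, hwa, hwa2⟩ := ha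
      obtain ⟨wb, hwb, hwb2⟩ := hb
      have : π0 (a / b) = wa * wb⁻¹ := by
        rw [div_eq_mul_inv, hπ0_mul, hπ0_inv, ← hwa2, ← hwb2]
        group
      simp only [Set.mem_preimage, this]
      exact hWWV wa wb hwa hwb
    set πhom' : G →* M := MonoidHom.mk' π0 hπ0_mul with hπhom'_def
    exact continuous_of_continuousAt_one πhom' hcont1
  -- Step 6: a.e. identity for aa
  have hKey : ∀ g : G, ∀ᵐ u ∂mG, aa (g * u) = π0 g * aa u := by
    intro g
    filter_upwards [hπ0 g] with u hu
    have : aa (g * u) * (aa u)⁻¹ = π0 g := hu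
    rw [← this]; group
  -- Step 7: upgrade to a product statement and change variables
  obtain ⟨c₀, hc₀⟩ : ∃ c₀ : M, ∀ᵐ x ∂mG, aa x = π0 x * c₀ := by
    have hSm : MeasurableSet {p : G × G | aa (p.1 * p.2) = π0 p.1 * aa p.2} := by
      have m1 : StronglyMeasurable (fun p : G × G => aa (p.1 * p.2)) :=
        (haam.comp measurable_mul).stronglyMeasurable
      have m2 : StronglyMeasurable (fun p : G × G => π0 p.1 * aa p.2) :=
        ((hπ0_meas.comp measurable_fst).mul (haam.comp measurable_snd)).stronglyMeasurable
      exact m1.measurableSet_eq_fun m2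
    have hprod : ∀ᵐ p ∂(mG.prod mG), aa (p.1 * p.2) = π0 p.1 * aa p.2 := by
      have h0 : (mG.prod mG) {p : G × G | aa (p.1 * p.2) = π0 p.1 * aa p.2}ᶜ = 0 := by
        rw [Measure.measure_prod_null hSm.compl]
        refine Filter.Eventually.of_forall fun g => ?_
        show mG (Prod.mk g ⁻¹' {p : G × G | aa (p.1 * p.2) = π0 p.1 * aa p.2}ᶜ) = 0
        exact measure_mono_null (fun u hu => hu) (MeasureTheory.ae_iff.mp (hKey g))
      rw [MeasureTheory.ae_iff]
      simpa [Set.compl_setOf] using h0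
    have hpull : ∀ᵐ q ∂(mG.prod mG),
        aa (q.1 * q.2⁻¹ * q.2) = π0 (q.1 * q.2⁻¹) * aa q.2 := by
      have h0 := (aux_mp_xmul mG).quasiMeasurePreserving.preimage_null
        (MeasureTheory.ae_iff.mp hprod)
      rw [MeasureTheory.ae_iff]
      exact measure_mono_null (fun q hq => hq) h0
    have hE : ∀ᵐ q ∂(mG.prod mG), aa q.1 = π0 q.1 * ((π0 q.2)⁻¹ * aa q.2) := by
      filter_upwards [hpull] with q hq
      have h1 : q.1 * q.2⁻¹ * q.2 = q.1 := by group
      rw [h1] at hq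
      rw [hq, hπ0_mul, hπ0_inv]
      group
    have hsw : ∀ᵐ q ∂(mG.prod mG), aa q.2 = π0 q.2 * ((π0 q.1)⁻¹ * aa q.1) :=
      Measure.measurePreserving_swap.quasiMeasurePreserving.ae hE
    obtain ⟨x₀, hx₀⟩ := (Measure.ae_ae_of_ae_prod hsw).exists
    exact ⟨(π0 x₀)⁻¹ * aa x₀, hx₀⟩
  -- Step 8: the β side
  set ρ : G → M := fun g => c₀⁻¹ * π0 g * c₀ with hρ_def
  obtain ⟨t, ht⟩ : ∃ t : M, ∀ᵐ y ∂mG, bb y = ρ y * t := by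
    set E : Set G := {x : G | aa x = π0 x * c₀} with hE_def
    have hEm : MeasurableSet E := by
      have m1 : StronglyMeasurable aa := haam.stronglyMeasurable
      have m2 : StronglyMeasurable (fun x => π0 x * c₀) :=
        (hπ0_meas.mul_const c₀).stronglyMeasurable
      exact m1.measurableSet_eq_fun m2
    have hEco : mG Eᶜ = 0 := by
      rw [hE_def, Set.compl_setOf]
      exact MeasureTheory.ae_iff.mp hc₀
    have hM1 : MeasurePreserving (fun p : G × G × G => (p.1, p.2.1))
        (mG.prod (mG.prod mG)) (mG.prod mG) :=
      (MeasurePreserving.id mG).prod (aux_mp_fst mG mG)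
    have hM2 := aux_mp_T4 mG
    have hM3 : MeasurePreserving (fun p : G × G × G => p.1) (mG.prod (mG.prod mG)) mG :=
      aux_mp_fst mG (mG.prod mG)
    have hM4 : MeasurePreserving (fun p : G × G × G => p.1 * p.2.1 * p.2.2⁻¹)
        (mG.prod (mG.prod mG)) mG := (aux_mp_fst mG mG).comp (aux_mp_T4 mG)
    have h1 : ∀ᵐ p ∂(mG.prod (mG.prod mG)), (p.1, p.2.1) ∈ Z := by
      have h0 := hM1.quasiMeasurePreserving.preimage_null hZco
      rw [MeasureTheory.ae_iff]
      exact measure_mono_null (fun p hp => hp) h0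
    have h2 : ∀ᵐ p ∂(mG.prod (mG.prod mG)), (p.1 * p.2.1 * p.2.2⁻¹, p.2.2) ∈ Z := by
      have h0 := hM2.quasiMeasurePreserving.preimage_null hZco
      rw [MeasureTheory.ae_iff]
      exact measure_mono_null (fun p hp => hp) h0
    have h3 : ∀ᵐ p ∂(mG.prod (mG.prod mG)), p.1 ∈ E := by
      have h0 := hM3.quasiMeasurePreserving.preimage_null hEco
      rw [MeasureTheory.ae_iff]
      exact measure_mono_null (fun p hp => hp) h0
    have h4 : ∀ᵐ p ∂(mG.prod (mG.prod mG)), p.1 * p.2.1 * p.2.2⁻¹ ∈ E := by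
      have h0 := hM4.quasiMeasurePreserving.preimage_null hEco
      rw [MeasureTheory.ae_iff]
      exact measure_mono_null (fun p hp => hp) h0
    have hstep : ∀ᵐ p ∂(mG.prod (mG.prod mG)),
        bb p.2.1 = ρ p.2.1 * ((ρ p.2.2)⁻¹ * bb p.2.2) := by
      filter_upwards [h1, h2, h3, h4] with p hp1 hp2 hp3 hp4
      have e1 : aa p.1 * bb p.2.1 = aa (p.1 * p.2.1 * p.2.2⁻¹) * bb p.2.2 :=
        hco' _ _ hp1 hp2 (by group)
      have hπprod : π0 (p.1 * p.2.1 * p.2.2⁻¹) = π0 p.1 * (π0 p.2.1 * (π0 p.2.2)⁻¹) := by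
        rw [show p.1 * p.2.1 * p.2.2⁻¹ = p.1 * (p.2.1 * p.2.2⁻¹) from by group,
          hπ0_mul, hπ0_mul, hπ0_inv]
      have hp3' : aa p.1 = π0 p.1 * c₀ := hp3
      have hp4' : aa (p.1 * p.2.1 * p.2.2⁻¹) = π0 (p.1 * p.2.1 * p.2.2⁻¹) * c₀ := hp4
      rw [hp3', hp4', hπprod] at e1
      have e2 : bb p.2.1 = (π0 p.1 * c₀)⁻¹ * (π0 p.1 * (π0 p.2.1 * (π0 p.2.2)⁻¹) * c₀ * bb p.2.2) := by
        rw [← e1]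
        group
      rw [e2]
      simp only [hρ_def]
      group
    obtain ⟨x₀, hx₀⟩ := (Measure.ae_ae_of_ae_prod hstep).exists
    have hsw : ∀ᵐ q ∂(mG.prod mG), bb q.2 = ρ q.2 * ((ρ q.1)⁻¹ * bb q.1) :=
      Measure.measurePreserving_swap.quasiMeasurePreserving.ae hx₀
    obtain ⟨y₀, hy₀⟩ := (Measure.ae_ae_of_ae_prod hsw).exists
    exact ⟨(ρ y₀)⁻¹ * bb y₀, hy₀⟩
  -- Step 9: assemble
  set πhom : G →* M := MonoidHom.mk' π0 hπ0_mul with hπhom_def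
  set ρhom : G →* M := ((MulAut.conj c₀⁻¹).toMonoidHom.comp πhom) with hρhom_def
  have hρhom : ∀ g, ρhom g = c₀⁻¹ * π0 g * c₀ := by
    intro g
    simp [hρhom_def, hπhom_def, MulAut.conj_apply, mul_assoc]
  refine ⟨ρhom, ?_, c₀, t, ?_, ?_⟩
  · have : Continuous fun g => c₀⁻¹ * π0 g * c₀ := by
      fun_prop
    exact this.congr fun g => (hρhom g).symm
  · have hXae : ∀ᵐ x ∂mG, x ∈ X := by
      rw [MeasureTheory.ae_iff]
      exact hXco
    filter_upwards [hXae, hc₀] with x hx h1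
    rw [← haaX hx, h1, hρhom]
    group
  · have hXae : ∀ᵐ x ∂mG, x ∈ X := by
      rw [MeasureTheory.ae_iff]
      exact hXco
    filter_upwards [hXae, ht] with y hy h1
    rw [← hbbX hy, h1, hρhom, hρ_def]
end

section
/- Let G and M be compact groups with M second countable, and let N be a closed subgroup of G with Haar probability measure m_N. Let C ⊆ G and I ⊆ M be Borel sets, and suppose there exist a continuous surjective homomorphism ξ : N → M, an m_G-conull Borel set X ⊆ G, and a map γ : X → M such that for every x ∈ X the sets x⁻¹C ∩ N and ξ⁻¹(I·γ(x)) agree up to an m_N-null set. If the right essential stabilizer of I in M is trivial, i.e. {t ∈ M : m_M(I Δ It) = 0} = {e}, then γ is Borel measurable on X. -/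
open MeasureTheory Set Pointwise Function

open scoped ENNReal NNReal symmDiff

section Aux

private lemma aux_section_measurable {G Y : Type*}
    [Group G] [TopologicalSpace G] [IsTopologicalGroup G]
    [MeasurableSpace G] [BorelSpace G]
    [TopologicalSpace Y] [MeasurableSpace Y] [BorelSpace Y]
    (φ : Y → G) (hφ : Continuous φ)
    (μ : Measure Y) [IsFiniteMeasure μ] [μ.InnerRegular]
    (D : Set Y) (hD : MeasurableSet D) :
    ∀ ⦃A : Set G⦄, MeasurableSet A →
      Measurable (fun x : G => μ ({n : Y | x * φ n ∈ A} ∩ D)) := by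
  refine MeasurableSpace.induction_on_inter
    (C := fun A _ => Measurable (fun x : G => μ ({n : Y | x * φ n ∈ A} ∩ D)))
    (s := {s : Set G | IsOpen s}) (BorelSpace.measurable_eq)
    (fun s hs t ht _ => hs.inter ht) ?_ ?_ ?_ ?_
  · simp only [Set.mem_empty_iff_false, Set.setOf_false, Set.empty_inter, measure_empty]
    exact measurable_const
  · intro U hU
    have hlsc : LowerSemicontinuous fun x : G => μ ({n : Y | x * φ n ∈ U} ∩ D) := by
      intro x c hc
      have hSopen : ∀ y : G, IsOpen {n : Y | y * φ n ∈ U} :=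
        fun y => hU.preimage (continuous_const.mul hφ)
      have hmeas : MeasurableSet ({n : Y | x * φ n ∈ U} ∩ D) :=
        (hSopen x).measurableSet.inter hD
      obtain ⟨K, hKsub, hKcomp, hKgt⟩ := hmeas.exists_lt_isCompact hc
      have hK'sub : (fun n => x * φ n) '' K ⊆ U := by
        rintro _ ⟨n, hn, rfl⟩; exact (hKsub hn).1
      obtain ⟨V, hV, hVK⟩ := compact_open_separated_mul_left
        (hKcomp.image (continuous_const.mul hφ)) hU hK'sub
      have hW : (fun y : G => y * x⁻¹) ⁻¹' V ∈ nhds x := by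
        have hca : ContinuousAt (fun y : G => y * x⁻¹) x := (continuous_mul_right x⁻¹).continuousAt
        exact hca.preimage_mem_nhds (by simpa using hV)
      filter_upwards [hW] with y hy
      refine lt_of_lt_of_le hKgt (measure_mono ?_)
      intro n hn
      refine ⟨?_, (hKsub hn).2⟩
      have : (y * x⁻¹) * (x * φ n) ∈ U := hVK (Set.mul_mem_mul hy ⟨n, hn, rfl⟩)
      simpa [mul_assoc] using this
    exact hlsc.measurable
  · intro A hA hPA
    have heq : (fun x : G => μ ({n : Y | x * φ n ∈ Aᶜ} ∩ D))
        = fun x => μ D - μ ({n : Y | x * φ n ∈ A} ∩ D) := by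
      funext x
      have hxA : MeasurableSet {n : Y | x * φ n ∈ A} :=
        hA.preimage (continuous_const.mul hφ).measurable
      rw [← measure_diff inter_subset_right (hxA.inter hD).nullMeasurableSet (measure_ne_top μ _)]
      congr 1
      ext n
      simp only [Set.mem_diff, Set.mem_inter_iff, Set.mem_setOf_eq, Set.mem_compl_iff]
      tauto
    rw [heq]
    exact Measurable.const_sub hPA _
  · intro f hdisj hmeas hP
    have heq : (fun x : G => μ ({n : Y | x * φ n ∈ ⋃ i, f i} ∩ D))
        = fun x => ∑' i, μ ({n : Y | x * φ n ∈ f i} ∩ D) := by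
      funext x
      rw [← measure_iUnion]
      · congr 1
        ext n
        simp only [Set.mem_iUnion, Set.mem_inter_iff, Set.mem_setOf_eq]
        tauto
      · intro i j hij
        exact ((hdisj hij).preimage (fun n : Y => x * φ n)).mono inf_le_left inf_le_left
      · exact fun i => ((hmeas i).preimage (continuous_const.mul hφ).measurable).inter hD
    rw [heq]
    exact Measurable.ennreal_tsum fun i => hP i

private lemma aux_translate_cont {M : Type*} [Group M] [TopologicalSpace M] [IsTopologicalGroup M]
    [CompactSpace M] [T2Space M] [MeasurableSpace M] [BorelSpace M]
    (mM : Measure M) [mM.IsHaarMeasure] [IsProbabilityMeasure mM]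
    (rinv : ∀ (t : M) (E : Set M), MeasurableSet E → mM ((fun m => m * t) ⁻¹' E) = mM E)
    (I : Set M) (hI : MeasurableSet I) {ε : ℝ≥0∞} (hε : 0 < ε) :
    ∃ V ∈ nhds (1 : M), ∀ r ∈ V, mM (symmDiff I ((fun m => m * r) ⁻¹' I)) < ε := by
  rcases lt_or_ge 1 ε with h1 | h1
  · refine ⟨Set.univ, Filter.univ_mem, fun r _ => lt_of_le_of_lt ?_ h1⟩
    calc mM (symmDiff I ((fun m => m * r) ⁻¹' I)) ≤ mM Set.univ :=
          measure_mono (Set.subset_univ _)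
      _ = 1 := measure_univ
  · have hεtop : ε ≠ ⊤ := fun h => by simp [h] at h1
    have hε2 : (0:ℝ≥0∞) < ε / 2 := ENNReal.half_pos hε.ne'
    have hη : ε / 2 / 2 ≠ 0 := (ENNReal.half_pos hε2.ne').ne'
    have hηtop : ε / 2 / 2 ≠ ⊤ :=
      (ENNReal.div_lt_top (ENNReal.div_lt_top hεtop two_ne_zero).ne two_ne_zero).ne
    obtain ⟨K, hKI, hKcomp, hK⟩ := hI.exists_isCompact_lt_add (measure_ne_top mM I) hη
    obtain ⟨U, hIU, hUopen, hU⟩ := Set.exists_isOpen_lt_add I (measure_ne_top mM I) hη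
    have hKU : K ⊆ U := hKI.trans hIU
    obtain ⟨V0, hV0, hKV0⟩ := compact_open_separated_mul_right hKcomp hUopen hKU
    have hV0inv : V0⁻¹ ∈ nhds (1 : M) := by
      have hca : ContinuousAt (fun m : M => m⁻¹) 1 := continuous_inv.continuousAt
      have := hca.preimage_mem_nhds (by simpa using hV0)
      simpa [Set.inv_preimage] using this
    have key : ∀ u : M, u⁻¹ ∈ V0 → mM (I \ ((fun m => m * u) ⁻¹' I)) < ε / 2 := by
      intro u hu
      have hKmeas : MeasurableSet K := hKcomp.isClosed.measurableSet
      have hQmeas : MeasurableSet ((fun m => m * u) ⁻¹' K) := (measurable_mul_const u) hKmeas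
      have hQsub : ((fun m => m * u) ⁻¹' K) ⊆ U := by
        intro m hm
        have : (m * u) * u⁻¹ ∈ K * V0 := Set.mul_mem_mul hm hu
        simpa [mul_assoc] using hKV0 this
      have hQP : ((fun m => m * u) ⁻¹' K) ⊆ (fun m => m * u) ⁻¹' I :=
        fun m hm => hKI hm
      have hsub : I \ ((fun m => m * u) ⁻¹' I) ⊆ U \ ((fun m => m * u) ⁻¹' K) :=
        fun m hm => ⟨hIU hm.1, fun h => hm.2 (hQP h)⟩
      have hQm : mM ((fun m => m * u) ⁻¹' K) = mM K := rinv u K hKmeas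
      have hsum : mM (U \ ((fun m => m * u) ⁻¹' K)) + mM ((fun m => m * u) ⁻¹' K) = mM U := by
        rw [← measure_union disjoint_sdiff_self_left hQmeas, Set.diff_union_of_subset hQsub]
      have hUb : mM U < mM K + ε / 2 := by
        calc mM U < mM I + ε / 2 / 2 := hU
          _ ≤ (mM K + ε / 2 / 2) + ε / 2 / 2 := add_le_add_left hK.le _
          _ = mM K + ε / 2 := by rw [add_assoc, ENNReal.add_halves]
      have hdiff : mM (U \ ((fun m => m * u) ⁻¹' K)) < ε / 2 := by
        have h' : mM ((fun m => m * u) ⁻¹' K) + mM (U \ ((fun m => m * u) ⁻¹' K))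
            < mM ((fun m => m * u) ⁻¹' K) + ε / 2 := by
          calc mM ((fun m => m * u) ⁻¹' K) + mM (U \ ((fun m => m * u) ⁻¹' K))
              = mM U := by rw [add_comm]; exact hsum
            _ < mM K + ε / 2 := hUb
            _ = mM ((fun m => m * u) ⁻¹' K) + ε / 2 := by rw [hQm]
        exact (ENNReal.add_lt_add_iff_left (measure_ne_top mM _)).mp h'
      exact lt_of_le_of_lt (measure_mono hsub) hdiff
    refine ⟨V0⁻¹ ∩ V0, Filter.inter_mem hV0inv hV0, fun r hr => ?_⟩
    have h1' : mM (I \ ((fun m => m * r) ⁻¹' I)) < ε / 2 := key r (Set.mem_inv.mp hr.1)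
    have h2' : mM (((fun m => m * r) ⁻¹' I) \ I) < ε / 2 := by
      have hset : ((fun m => m * r) ⁻¹' I) \ I
          = (fun m => m * r) ⁻¹' (I \ ((fun m => m * r⁻¹) ⁻¹' I)) := by
        ext m
        simp [Set.mem_diff, mul_assoc]
      rw [hset, rinv r _ (hI.diff ((measurable_mul_const r⁻¹) hI))]
      exact key r⁻¹ (by simpa using hr.2)
    calc mM (symmDiff I ((fun m => m * r) ⁻¹' I))
        ≤ mM (I \ ((fun m => m * r) ⁻¹' I)) + mM (((fun m => m * r) ⁻¹' I) \ I) := by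
          rw [symmDiff_def]; exact measure_union_le _ _
      _ < ε / 2 + ε / 2 := ENNReal.add_lt_add h1' h2'
      _ = ε := ENNReal.add_halves ε

end Aux

/-- Lemma `borel`: if the fibers `x⁻¹C ∩ N` agree, up to `m_N`-null
sets, with pullbacks `ξ⁻¹(I·γ(x))` of right translates of a set `I ⊆ M` with trivial
right essential stabilizer, then `γ` is Borel measurable on the conull set `X`. -/
theorem translation_parameter_is_measurable
    {G M : Type*}
    [Group G] [TopologicalSpace G] [IsTopologicalGroup G] [CompactSpace G] [T2Space G]
    [MeasurableSpace G] [BorelSpace G]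
    [Group M] [TopologicalSpace M] [IsTopologicalGroup M] [CompactSpace M]
    [SecondCountableTopology M] [T2Space M] [MeasurableSpace M] [BorelSpace M]
    (mG : Measure G) [mG.IsHaarMeasure] [IsProbabilityMeasure mG]
    (mM : Measure M) [mM.IsHaarMeasure] [IsProbabilityMeasure mM]
    (N : Subgroup G) (hNclosed : IsClosed (N : Set G))
    (μN : Measure ↥N) [μN.IsHaarMeasure] [IsProbabilityMeasure μN]
    (C : Set G) (hC : MeasurableSet C) (I : Set M) (hI : MeasurableSet I)
    (ξ : ↥N →* M) (hξc : Continuous ξ) (hξs : Function.Surjective ξ)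
    (X : Set G) (hX : MeasurableSet X) (hXco : mG Xᶜ = 0)
    (γ : G → M)
    (hsim : ∀ x ∈ X,
      μN (symmDiff {n : ↥N | x * (n : G) ∈ C} (⇑ξ ⁻¹' ((· * γ x) '' I))) = 0)
    (hstab : ∀ t : M, mM (symmDiff I ((· * t) '' I)) = 0 → t = 1) :
    Measurable fun x : X => γ ↑x := by
  haveI : CompactSpace ↥N := isCompact_iff_compactSpace.mp hNclosed.isCompact
  haveI : BorelSpace ↥N := Subtype.borelSpace (N : Set G)
  have hmap : MeasurePreserving (⇑ξ) μN mM := ξ.measurePreserving hξc hξs (by simp)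
  -- right invariance of `mM`
  have rinv : ∀ (t : M) (E : Set M), MeasurableSet E → mM ((fun m => m * t) ⁻¹' E) = mM E := by
    intro t E hE
    haveI : IsProbabilityMeasure (Measure.map (fun m : M => m * t) mM) :=
      Measure.isProbabilityMeasure_map (measurable_mul_const t).aemeasurable
    have hsc := Measure.isMulInvariant_eq_smul_of_compactSpace
      (Measure.map (fun m : M => m * t) mM) mM
    have hone : ((Measure.haarScalarFactor (Measure.map (fun m : M => m * t) mM) mM : ℝ≥0)
        : ℝ≥0∞) = 1 := by
      have hu := congrArg (fun ν : Measure M => ν Set.univ) hsc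
      rw [Measure.smul_apply, measure_univ, measure_univ, ENNReal.smul_def, smul_eq_mul,
        mul_one] at hu
      exact hu.symm
    have hmapt : Measure.map (fun m : M => m * t) mM = mM := by
      rw [hsc]
      ext s hs
      simp [Measure.smul_apply, ENNReal.smul_def, hone]
    conv_rhs => rw [← hmapt]
    rw [Measure.map_apply (measurable_mul_const t) hE]
  have hξmeas : Measurable (⇑ξ) := hξc.measurable
  have hBmeas : ∀ t : M, MeasurableSet ((· * t) '' I : Set M) := by
    intro t; rw [Set.image_mul_right]; exact (measurable_mul_const t⁻¹) hI
  have hBpre : ∀ t : M, MeasurableSet (⇑ξ ⁻¹' ((· * t) '' I)) := fun t => hξmeas (hBmeas t)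
  have hAmeas : ∀ x : G, MeasurableSet {n : ↥N | x * (n : G) ∈ C} :=
    fun x => hC.preimage (continuous_const.mul continuous_subtype_val).measurable
  -- key translation identity
  have hBdiff : ∀ s t : M, μN (symmDiff (⇑ξ ⁻¹' ((· * s) '' I)) (⇑ξ ⁻¹' ((· * t) '' I)))
      = mM (symmDiff I ((fun m => m * (s * t⁻¹)) ⁻¹' I)) := by
    intro s t
    have h1 : symmDiff (⇑ξ ⁻¹' ((· * s) '' I)) (⇑ξ ⁻¹' ((· * t) '' I))
        = ⇑ξ ⁻¹' (symmDiff ((· * s) '' I) ((· * t) '' I)) := by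
      simp only [Set.symmDiff_def, Set.preimage_union, Set.preimage_diff]
    have h2 : symmDiff ((· * s) '' I) ((· * t) '' I)
        = (fun m => m * s⁻¹) ⁻¹' (symmDiff I ((fun m => m * (s * t⁻¹)) ⁻¹' I)) := by
      rw [Set.image_mul_right, Set.image_mul_right]
      ext m
      simp only [Set.mem_symmDiff, Set.mem_preimage, mul_assoc, inv_mul_cancel_left]
    rw [h1, hmap.measure_preimage ((hBmeas s).symmDiff (hBmeas t)).nullMeasurableSet, h2,
      rinv s⁻¹ _ (hI.symmDiff ((measurable_mul_const (s * t⁻¹)) hI))]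
  have hstab' : ∀ r : M, mM (symmDiff I ((fun m => m * r) ⁻¹' I)) = 0 → r = 1 := by
    intro r h
    have himg : ((· * r⁻¹) '' I : Set M) = (fun m => m * r) ⁻¹' I := by
      rw [Set.image_mul_right, inv_inv]
    have := hstab r⁻¹ (by rw [himg]; exact h)
    exact inv_eq_one.mp this
  -- measurability of the distance functions
  have hFmeas : ∀ t : M, Measurable (fun x : G =>
      μN (symmDiff {n : ↥N | x * (n : G) ∈ C} (⇑ξ ⁻¹' ((· * t) '' I)))) := by
    intro t
    have h1 := aux_section_measurable (fun n : ↥N => (n : G)) continuous_subtype_val μN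
      _ (hBpre t).compl hC
    have h2 := aux_section_measurable (fun n : ↥N => (n : G)) continuous_subtype_val μN
      _ (hBpre t) hC.compl
    have heq : (fun x : G =>
        μN (symmDiff {n : ↥N | x * (n : G) ∈ C} (⇑ξ ⁻¹' ((· * t) '' I))))
        = fun x => μN ({n : ↥N | x * (n : G) ∈ C} ∩ (⇑ξ ⁻¹' ((· * t) '' I))ᶜ)
          + μN ({n : ↥N | x * (n : G) ∈ Cᶜ} ∩ (⇑ξ ⁻¹' ((· * t) '' I))) := by
      funext x
      have hs1 : {n : ↥N | x * (n : G) ∈ C} \ (⇑ξ ⁻¹' ((· * t) '' I))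
          = {n : ↥N | x * (n : G) ∈ C} ∩ (⇑ξ ⁻¹' ((· * t) '' I))ᶜ := Set.diff_eq _ _
      have hs2 : (⇑ξ ⁻¹' ((· * t) '' I)) \ {n : ↥N | x * (n : G) ∈ C}
          = {n : ↥N | x * (n : G) ∈ Cᶜ} ∩ (⇑ξ ⁻¹' ((· * t) '' I)) := by
        ext n
        simp only [Set.mem_diff, Set.mem_inter_iff, Set.mem_setOf_eq, Set.mem_compl_iff]
        tauto
      rw [Set.symmDiff_def,
        measure_union disjoint_sdiff_sdiff ((hBpre t).diff (hAmeas x)), hs1, hs2]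
    rw [heq]
    exact h1.add h2
  -- triangle inequality
  have htri : ∀ (x : G) (s t : M),
      μN (symmDiff {n : ↥N | x * (n : G) ∈ C} (⇑ξ ⁻¹' ((· * s) '' I)))
      ≤ μN (symmDiff {n : ↥N | x * (n : G) ∈ C} (⇑ξ ⁻¹' ((· * t) '' I)))
        + mM (symmDiff I ((fun m => m * (t * s⁻¹)) ⁻¹' I)) := by
    intro x s t
    rw [← hBdiff t s]
    exact measure_symmDiff_le _ _ _
  -- uniqueness
  have huniq : ∀ x ∈ X, ∀ s : M,
      μN (symmDiff {n : ↥N | x * (n : G) ∈ C} (⇑ξ ⁻¹' ((· * s) '' I))) = 0 → s = γ x := by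
    intro x hx s hs
    have h0 : mM (symmDiff I ((fun m => m * (s * (γ x)⁻¹)) ⁻¹' I)) = 0 := by
      rw [← hBdiff s (γ x)]
      refine le_antisymm ?_ zero_le
      calc μN (symmDiff (⇑ξ ⁻¹' ((· * s) '' I)) (⇑ξ ⁻¹' ((· * γ x) '' I)))
          ≤ μN (symmDiff (⇑ξ ⁻¹' ((· * s) '' I)) {n : ↥N | x * (n : G) ∈ C})
            + μN (symmDiff {n : ↥N | x * (n : G) ∈ C} (⇑ξ ⁻¹' ((· * γ x) '' I))) :=
            measure_symmDiff_le _ _ _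
        _ = 0 := by rw [symmDiff_comm, hs, hsim x hx, add_zero]
    exact mul_inv_eq_one.mp (hstab' _ h0)
  -- conclusion
  refine measurable_of_isClosed fun K hK => ?_
  obtain ⟨s0, hs0c, hs0d⟩ := TopologicalSpace.exists_countable_dense (↥K)
  classical
  set D : Set M := Subtype.val '' s0 with hDdef
  have hDK : D ⊆ K := by rintro _ ⟨⟨m, hm⟩, _, rfl⟩; exact hm
  have hDc : D.Countable := hs0c.image _
  have hKD : K ⊆ closure D := by
    intro k hk
    have h1 : (⟨k, hk⟩ : K) ∈ closure s0 := hs0d _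
    exact (image_closure_subset_closure_image continuous_subtype_val) ⟨_, h1, rfl⟩
  set T : Set G := ⋂ (m : ℕ), ⋃ t ∈ D, {x : G |
    μN (symmDiff {n : ↥N | x * (n : G) ∈ C} (⇑ξ ⁻¹' ((· * t) '' I)))
      < ((m : ℝ≥0∞) + 1)⁻¹} with hTdef
  have hTmeas : MeasurableSet T := by
    refine MeasurableSet.iInter fun m => ?_
    refine MeasurableSet.biUnion hDc fun t _ => ?_
    exact measurableSet_lt (hFmeas t) measurable_const
  have hiff : ∀ x : G, x ∈ X → (γ x ∈ K ↔ x ∈ T) := by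
    intro x hx
    constructor
    · intro hγ
      refine Set.mem_iInter.mpr fun m => ?_
      have hεpos : (0:ℝ≥0∞) < ((m : ℝ≥0∞) + 1)⁻¹ :=
        ENNReal.inv_pos.mpr (by simp)
      obtain ⟨V, hV, hVsmall⟩ := aux_translate_cont mM rinv I hI hεpos
      have hW : {u : M | γ x * u⁻¹ ∈ V} ∈ nhds (γ x) := by
        have hcont : ContinuousAt (fun u : M => γ x * u⁻¹) (γ x) :=
          (continuous_const.mul continuous_inv).continuousAt
        have := hcont.preimage_mem_nhds (by simpa using hV)
        exact this
      obtain ⟨t, htW, htD⟩ := mem_closure_iff_nhds.mp (hKD hγ) _ hW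
      refine Set.mem_biUnion htD ?_
      refine lt_of_le_of_lt (htri x t (γ x)) ?_
      rw [hsim x hx, zero_add]
      exact hVsmall _ htW
    · intro hxT
      have hsel : ∀ m : ℕ, ∃ t, t ∈ D ∧
          μN (symmDiff {n : ↥N | x * (n : G) ∈ C} (⇑ξ ⁻¹' ((· * t) '' I)))
            < ((m : ℝ≥0∞) + 1)⁻¹ := by
        intro m
        have := Set.mem_iInter.mp hxT m
        simpa using this
      choose t ht1 ht2 using hsel
      have hKcpt : IsCompact K := hK.isCompact
      haveI hne : Filter.NeBot (Filter.map t Filter.atTop) := Filter.map_neBot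
      obtain ⟨a, haK, hacl⟩ := hKcpt (f := Filter.map t Filter.atTop)
        (Filter.le_principal_iff.mpr (Filter.mem_map.mpr
          (Filter.Eventually.of_forall fun m => hDK (ht1 m))))
      have hamcp : MapClusterPt a Filter.atTop t := hacl
      have hFa : μN (symmDiff {n : ↥N | x * (n : G) ∈ C} (⇑ξ ⁻¹' ((· * a) '' I))) = 0 := by
        refine le_antisymm ?_ zero_le
        refine ENNReal.le_of_forall_pos_le_add fun ε hε _ => ?_
        rw [zero_add]
        have hε2 : (0:ℝ≥0∞) < (ε : ℝ≥0∞) / 2 :=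
          ENNReal.half_pos (by exact_mod_cast hε.ne')
        obtain ⟨V, hV, hVsmall⟩ := aux_translate_cont mM rinv I hI hε2
        have hW : {u : M | u * a⁻¹ ∈ V} ∈ nhds a := by
          have hcont : ContinuousAt (fun u : M => u * a⁻¹) a :=
            (continuous_mul_right a⁻¹).continuousAt
          have := hcont.preimage_mem_nhds (by simpa using hV)
          exact this
        have hfreq : ∃ᶠ m in Filter.atTop, t m ∈ {u : M | u * a⁻¹ ∈ V} :=
          mapClusterPt_iff_frequently.mp hamcp _ hW
        obtain ⟨n0, hn0⟩ := ENNReal.exists_inv_nat_lt hε2.ne'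
        obtain ⟨m, hmge, hmV⟩ := Filter.frequently_atTop.mp hfreq n0
        have hmono : ((m : ℝ≥0∞) + 1)⁻¹ ≤ ((n0 : ℝ≥0∞))⁻¹ := by
          refine ENNReal.inv_le_inv.mpr ?_
          calc ((n0 : ℝ≥0∞)) ≤ (m : ℝ≥0∞) := by exact_mod_cast hmge
            _ ≤ (m : ℝ≥0∞) + 1 := le_self_add
        calc μN (symmDiff {n : ↥N | x * (n : G) ∈ C} (⇑ξ ⁻¹' ((· * a) '' I)))
            ≤ μN (symmDiff {n : ↥N | x * (n : G) ∈ C} (⇑ξ ⁻¹' ((· * t m) '' I)))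
              + mM (symmDiff I ((fun u => u * (t m * a⁻¹)) ⁻¹' I)) := htri x a (t m)
          _ ≤ (ε : ℝ≥0∞) / 2 + (ε : ℝ≥0∞) / 2 := by
              refine add_le_add ?_ ?_
              · exact le_of_lt (lt_of_lt_of_le (ht2 m) (le_trans hmono hn0.le))
              · exact le_of_lt (hVsmall _ hmV)
          _ = (ε : ℝ≥0∞) := ENNReal.add_halves _
      have : a = γ x := huniq x hx a hFa
      rwa [← this]
  have hpre : (fun x : X => γ (x : G)) ⁻¹' K = Subtype.val ⁻¹' T := by
    ext x
    exact hiff x x.2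
  rw [hpre]
  exact measurable_subtype_coe hTmeas
end

section
/- Let G be a compact second countable group with Haar probability measure m_G, and suppose (μ_n) is a sequence of Borel probability measures on G converging to a Borel probability measure μ in the weak* topology. Then for every Borel set B ⊆ G and every subsequence (n_k) there exist a further subsequence (n_{k_j}) and an m_G-conull Borel set X ⊆ G such that lim_{j→∞} (r_x)_*μ_{n_{k_j}}(B) = (r_x)_*μ(B) for all x ∈ X, where (r_x)_*ν denotes the pushforward of a measure ν under right multiplication by x, i.e. (r_x)_*ν(B) = ν(Bx⁻¹). -/
open MeasureTheory Set Pointwise Function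

noncomputable section AuxProof

open Filter Topology MeasureTheory
open scoped ENNReal NNReal symmDiff

namespace WeakStarAux

variable {G : Type*} [Group G] [TopologicalSpace G] [IsTopologicalGroup G] [CompactSpace G]
  [SecondCountableTopology G] [T2Space G] [MeasurableSpace G] [BorelSpace G]

/-- Integrability of continuous functions on a compact space with a finite measure. -/
lemma cont_integrable {X : Type*} [TopologicalSpace X] [CompactSpace X] [T2Space X]
    [MeasurableSpace X] [OpensMeasurableSpace X] (ν : Measure X) [IsFiniteMeasure ν]
    {f : X → ℝ} (hf : Continuous f) : Integrable f ν :=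
  integrableOn_univ.mp (hf.continuousOn.integrableOn_compact isCompact_univ)

/-- Integration against a probability measure is `1`-Lipschitz on `C(X, ℝ)`. -/
lemma lip_integral {X : Type*} [TopologicalSpace X] [CompactSpace X] [T2Space X]
    [MeasurableSpace X] [OpensMeasurableSpace X] (ν : Measure X) [IsProbabilityMeasure ν] :
    LipschitzWith 1 (fun f : C(X, ℝ) => ∫ x, f x ∂ν) := by
  refine LipschitzWith.of_dist_le_mul fun f g => ?_
  rw [NNReal.coe_one, one_mul, dist_eq_norm,
    ← integral_sub (cont_integrable ν f.continuous) (cont_integrable ν g.continuous)]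
  calc ‖∫ x, (f x - g x) ∂ν‖ ≤ dist f g * (ν Set.univ).toReal := by
        refine norm_integral_le_of_norm_le_const (Filter.Eventually.of_forall fun x => ?_)
        rw [← dist_eq_norm]
        exact ContinuousMap.dist_apply_le_dist x
    _ = dist f g := by simp

variable (mG : Measure G) (B : Set G)

/-- The correlation function `k ↦ m_G(k⁻¹B ∩ B)` (as an `ℝ≥0∞`-valued function). -/
def psiE : G → ℝ≥0∞ := fun k => mG ({y | k * y ∈ B} ∩ B)

/-- The real-valued correlation function. -/
def psiR : G → ℝ := fun k => (psiE mG B k).toReal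

lemma psiE_meas [SFinite mG] (hB : MeasurableSet B) : Measurable (psiE mG B) := by
  have hS : MeasurableSet {p : G × G | p.1 * p.2 ∈ B ∧ p.2 ∈ B} :=
    ((continuous_fst.mul continuous_snd).measurable hB).inter (measurable_snd hB)
  exact measurable_measure_prodMk_left (ν := mG) hS

lemma psiE_le_one [IsProbabilityMeasure mG] (k : G) : psiE mG B k ≤ 1 := by
  simpa [psiE] using measure_mono (Set.subset_univ ({y | k * y ∈ B} ∩ B)) (μ := mG)

lemma psiE_ne_top [IsProbabilityMeasure mG] (k : G) : psiE mG B k ≠ ⊤ :=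
  ne_top_of_le_ne_top ENNReal.one_ne_top (psiE_le_one mG B k)

lemma psiE_eq_ofReal [IsProbabilityMeasure mG] (k : G) :
    psiE mG B k = ENNReal.ofReal (psiR mG B k) :=
  (ENNReal.ofReal_toReal (psiE_ne_top mG B k)).symm

/-- Continuity of the correlation function. -/
lemma psiR_cont [mG.IsHaarMeasure] [IsProbabilityMeasure mG] (hB : MeasurableSet B) :
    Continuous (psiR mG B) := by
  rw [continuous_iff_continuousAt]
  intro k₀
  -- the family of left-multiplication maps, as continuous maps
  set F : G → C(G, G) := fun k => ContinuousMap.mk (fun y => k * y)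
    (continuous_const.mul continuous_id) with hF
  have hFc : Continuous F := by
    apply ContinuousMap.continuous_of_continuous_uncurry
    exact continuous_fst.mul continuous_snd
  have hMP : ∀ k : G, MeasurePreserving (F k) mG mG := fun k =>
    measurePreserving_mul_left mG k
  have hsym : Tendsto (fun k => mG ((F k ⁻¹' B) ∆ (F k₀ ⁻¹' B))) (𝓝 k₀) (𝓝 0) :=
    tendsto_measure_symmDiff_preimage_nhds_zero (hFc.tendsto k₀)
      (Filter.Eventually.of_forall hMP) (hMP k₀) hB.nullMeasurableSet (measure_ne_top _ _)
  have hsymR : Tendsto (fun k => (mG ((F k ⁻¹' B) ∆ (F k₀ ⁻¹' B))).toReal) (𝓝 k₀) (𝓝 0) := by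
    have := (ENNReal.tendsto_toReal ENNReal.zero_ne_top).comp hsym
    simpa [Function.comp_def] using this
  have key : ∀ k, dist (psiR mG B k) (psiR mG B k₀) ≤ (mG ((F k ⁻¹' B) ∆ (F k₀ ⁻¹' B))).toReal := by
    intro k
    have hsub : ∀ k k' : G, psiE mG B k ≤ psiE mG B k' + mG ((F k ⁻¹' B) ∆ (F k' ⁻¹' B)) := by
      intro k k'
      refine le_trans (measure_mono ?_) (measure_union_le _ _)
      intro y hy
      rcases hy with ⟨hy1, hy2⟩
      by_cases h : k' * y ∈ B
      · exact Or.inl ⟨h, hy2⟩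
      · exact Or.inr (Or.inl ⟨hy1, h⟩)
    have hfin : ∀ k k' : G, mG ((F k ⁻¹' B) ∆ (F k' ⁻¹' B)) ≠ ⊤ := fun _ _ => measure_ne_top _ _
    have hR : ∀ k k' : G,
        psiR mG B k - psiR mG B k' ≤ (mG ((F k ⁻¹' B) ∆ (F k' ⁻¹' B))).toReal := by
      intro k k'
      have h1 := hsub k k'
      have h2 : (psiE mG B k).toReal ≤ (psiE mG B k' + mG ((F k ⁻¹' B) ∆ (F k' ⁻¹' B))).toReal :=
        ENNReal.toReal_mono (by
          exact ENNReal.add_ne_top.mpr ⟨psiE_ne_top mG B k', hfin k k'⟩) h1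
      rw [ENNReal.toReal_add (psiE_ne_top mG B k') (hfin k k')] at h2
      unfold psiR
      linarith
    rw [Real.dist_eq, abs_sub_le_iff]
    constructor
    · exact hR k k₀
    · have := hR k₀ k
      rwa [symmDiff_comm] at this
  refine tendsto_iff_dist_tendsto_zero.mpr ?_
  exact squeeze_zero (fun _ => dist_nonneg) key hsymR

variable [mG.IsHaarMeasure] [IsProbabilityMeasure mG]

/-- The key identity: the second mixed moment of the translated measures equals an
iterated integral of the correlation function. -/
lemma momentT (hB : MeasurableSet B) (ν ν' : Measure G)
    [IsProbabilityMeasure ν] [IsProbabilityMeasure ν'] :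
    ∫⁻ x, ν ((· * x) ⁻¹' B) * ν' ((· * x) ⁻¹' B) ∂mG
      = ∫⁻ g, ∫⁻ h, psiE mG B (g * h⁻¹) ∂ν' ∂ν := by
  set T : Set (G × (G × G)) := {q | q.2.1 * q.1 ∈ B ∧ q.2.2 * q.1 ∈ B} with hT
  have hTm : MeasurableSet T := by
    exact ((continuous_snd.fst.mul continuous_fst).measurable hB).inter
      ((continuous_snd.snd.mul continuous_fst).measurable hB)
  have step1 : ∀ x : G, ν ((· * x) ⁻¹' B) * ν' ((· * x) ⁻¹' B)
      = ∫⁻ p, T.indicator (1 : G × (G × G) → ℝ≥0∞) (x, p) ∂(ν.prod ν') := by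
    intro x
    have hset : (fun p : G × G => T.indicator (1 : G × (G × G) → ℝ≥0∞) (x, p))
        = (((· * x) ⁻¹' B) ×ˢ ((· * x) ⁻¹' B)).indicator (1 : G × G → ℝ≥0∞) := by
      funext p
      rfl
    rw [hset, lintegral_indicator_one
      ((((measurable_mul_const x) hB)).prod ((measurable_mul_const x) hB)),
      Measure.prod_prod]
  have step4 : ∀ p : G × G, ∫⁻ x, T.indicator (1 : G × (G × G) → ℝ≥0∞) (x, p) ∂mG
      = psiE mG B (p.1 * p.2⁻¹) := by
    intro p
    have hset : (fun x : G => T.indicator (1 : G × (G × G) → ℝ≥0∞) (x, p))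
        = ({x | p.1 * x ∈ B ∧ p.2 * x ∈ B}).indicator (1 : G → ℝ≥0∞) := by
      funext x
      rfl
    have hms : MeasurableSet {x : G | p.1 * x ∈ B ∧ p.2 * x ∈ B} :=
      ((measurable_const_mul p.1) hB).inter ((measurable_const_mul p.2) hB)
    rw [hset, lintegral_indicator_one hms]
    have hEq : {x | p.1 * x ∈ B ∧ p.2 * x ∈ B}
        = (fun x => p.2 * x) ⁻¹' ({y | (p.1 * p.2⁻¹) * y ∈ B} ∩ B) := by
      ext x
      simp only [Set.mem_setOf_eq, Set.mem_preimage, Set.mem_inter_iff]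
      constructor
      · rintro ⟨h1, h2⟩
        refine ⟨?_, h2⟩
        rwa [mul_assoc, inv_mul_cancel_left]
      · rintro ⟨h1, h2⟩
        rw [mul_assoc, inv_mul_cancel_left] at h1
        exact ⟨h1, h2⟩
    rw [hEq, measure_preimage_mul]
    rfl
  calc ∫⁻ x, ν ((· * x) ⁻¹' B) * ν' ((· * x) ⁻¹' B) ∂mG
      = ∫⁻ x, ∫⁻ p, T.indicator (1 : G × (G × G) → ℝ≥0∞) (x, p) ∂(ν.prod ν') ∂mG :=
        lintegral_congr step1
    _ = ∫⁻ p, ∫⁻ x, T.indicator (1 : G × (G × G) → ℝ≥0∞) (x, p) ∂mG ∂(ν.prod ν') := by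
        apply lintegral_lintegral_swap
        exact ((measurable_const.indicator hTm)).aemeasurable
    _ = ∫⁻ p, psiE mG B (p.1 * p.2⁻¹) ∂(ν.prod ν') := lintegral_congr step4
    _ = ∫⁻ g, ∫⁻ h, psiE mG B (g * h⁻¹) ∂ν' ∂ν :=
        lintegral_prod _ ((psiE_meas mG B hB).comp
          (measurable_fst.mul measurable_snd.inv)).aemeasurable

/-- The function `Φ_ν`. -/
def phi (ν : Measure G) : G → ℝ := fun g => ∫ h, psiR mG B (g * h⁻¹) ∂ν

/-- The quantity `q(ν, ν')`. -/
def qq (ν ν' : Measure G) : ℝ := ∫ g, phi mG B ν' g ∂ν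

lemma momentTR (hB : MeasurableSet B) (ν ν' : Measure G)
    [IsProbabilityMeasure ν] [IsProbabilityMeasure ν'] :
    (∫⁻ x, ν ((· * x) ⁻¹' B) * ν' ((· * x) ⁻¹' B) ∂mG).toReal = qq mG B ν ν' := by
  rw [momentT mG B hB ν ν']
  have hmeas : Measurable fun p : G × G => psiE mG B (p.1 * p.2⁻¹) :=
    (psiE_meas mG B hB).comp (measurable_fst.mul measurable_snd.inv)
  have hinner : ∀ g : G, phi mG B ν' g = (∫⁻ h, psiE mG B (g * h⁻¹) ∂ν').toReal := by
    intro g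
    rw [phi]
    exact integral_toReal
      ((hmeas.comp (measurable_prodMk_left (x := g))).aemeasurable)
      (Filter.Eventually.of_forall fun h =>
        lt_of_le_of_lt (psiE_le_one mG B _) ENNReal.one_lt_top)
  have houter : Measurable fun g => ∫⁻ h, psiE mG B (g * h⁻¹) ∂ν' := by
    apply Measurable.lintegral_prod_right (f := fun g h => psiE mG B (g * h⁻¹))
    exact hmeas
  rw [qq]
  rw [show (fun g => phi mG B ν' g) = fun g => (∫⁻ h, psiE mG B (g * h⁻¹) ∂ν').toReal from
    funext hinner]
  rw [integral_toReal houter.aemeasurable]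
  refine Filter.Eventually.of_forall fun g => ?_
  calc ∫⁻ h, psiE mG B (g * h⁻¹) ∂ν' ≤ ∫⁻ _, 1 ∂ν' :=
        lintegral_mono fun h => psiE_le_one mG B _
    _ = 1 := by simp
    _ < ⊤ := ENNReal.one_lt_top


/-- The correlation kernel as a continuous map on `G × G`. -/
def KK (hB : MeasurableSet B) : C(G × G, ℝ) :=
  ⟨fun p => psiR mG B (p.1 * p.2⁻¹),
    (psiR_cont mG B hB).comp (continuous_fst.mul continuous_snd.inv)⟩

lemma phi_apply_eq (hB : MeasurableSet B) (ν : Measure G) (g : G) :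
    phi mG B ν g = ∫ h, ((KK mG B hB).curry g) h ∂ν := by
  simp only [KK, ContinuousMap.curry_apply, ContinuousMap.coe_mk]
  rfl

lemma phi_cont (hB : MeasurableSet B) (ν : Measure G) [IsProbabilityMeasure ν] :
    Continuous (phi mG B ν) := by
  have h : Continuous fun g => (fun f0 : C(G, ℝ) => ∫ x, f0 x ∂ν) ((KK mG B hB).curry g) :=
    (lip_integral ν).continuous.comp ((KK mG B hB).curry.continuous)
  exact h.congr fun g => (phi_apply_eq mG B hB ν g).symm

lemma phi_unif (hB : MeasurableSet B) (νs : ℕ → Measure G)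
    (hνs : ∀ n, IsProbabilityMeasure (νs n)) (μ : Measure G) [IsProbabilityMeasure μ]
    (hconv : ∀ f : C(G, ℝ),
      Tendsto (fun n => ∫ x, f x ∂(νs n)) atTop (𝓝 (∫ x, f x ∂μ))) :
    TendstoUniformly (fun n => phi mG B (νs n)) (phi mG B μ) atTop := by
  have hequi : Equicontinuous (fun n => phi mG B (νs n)) := by
    intro g₀ U hU
    rcases Metric.mem_uniformity_dist.1 hU with ⟨ε, hε, hball⟩
    have hev : ∀ᶠ g in 𝓝 g₀, dist ((KK mG B hB).curry g) ((KK mG B hB).curry g₀) < ε :=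
      (Metric.tendsto_nhds.1 (((KK mG B hB).curry.continuous).tendsto g₀)) ε hε
    filter_upwards [hev] with g hg n
    refine hball ?_
    haveI := hνs n
    calc dist (phi mG B (νs n) g₀) (phi mG B (νs n) g)
        = dist ((fun f0 : C(G, ℝ) => ∫ x, f0 x ∂(νs n)) ((KK mG B hB).curry g₀))
            ((fun f0 : C(G, ℝ) => ∫ x, f0 x ∂(νs n)) ((KK mG B hB).curry g)) := by
          rw [phi_apply_eq mG B hB, phi_apply_eq mG B hB]
      _ ≤ 1 * dist ((KK mG B hB).curry g₀) ((KK mG B hB).curry g) := by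
          simpa using (lip_integral (νs n)).dist_le_mul ((KK mG B hB).curry g₀)
            ((KK mG B hB).curry g)
      _ < ε := by rw [one_mul, dist_comm]; exact hg
  have hpt : Tendsto (fun n => phi mG B (νs n)) atTop (𝓝 (phi mG B μ)) := by
    rw [tendsto_pi_nhds]
    intro g
    have h := hconv ((KK mG B hB).curry g)
    have e1 : ∀ ν : Measure G, (∫ x, ((KK mG B hB).curry g) x ∂ν) = phi mG B ν g := fun ν =>
      (phi_apply_eq mG B hB ν g).symm
    simp only [e1] at h
    exact h
  have h2 := (hequi.tendsto_uniformFun_iff_pi atTop (phi mG B μ)).mpr hpt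
  exact UniformFun.tendsto_iff_tendstoUniformly.mp h2

end WeakStarAux

end AuxProof


open scoped ENNReal NNReal


/-- Proposition rel1.1: if `μ_n → μ` in the weak* topology, then
for every Borel set `B` and every subsequence there is a further subsequence along
which `(r_x)_*μ_n(B) → (r_x)_*μ(B)` for Haar-almost every `x`. -/
theorem weakstar_convergence_of_translates
    {G : Type*} [Group G] [TopologicalSpace G] [IsTopologicalGroup G] [CompactSpace G]
    [SecondCountableTopology G] [T2Space G] [MeasurableSpace G] [BorelSpace G]
    (mG : Measure G) [mG.IsHaarMeasure] [IsProbabilityMeasure mG]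
    (μs : ℕ → Measure G) (hμs : ∀ n, IsProbabilityMeasure (μs n))
    (μ : Measure G) [IsProbabilityMeasure μ]
    (hconv : ∀ f : C(G, ℝ),
      Filter.Tendsto (fun n => ∫ x, f x ∂(μs n)) Filter.atTop (nhds (∫ x, f x ∂μ)))
    (B : Set G) (hB : MeasurableSet B) (nk : ℕ → ℕ) (hnk : StrictMono nk) :
    ∃ j : ℕ → ℕ, StrictMono j ∧ ∃ X : Set G, MeasurableSet X ∧ mG Xᶜ = 0 ∧
      ∀ x ∈ X, Filter.Tendsto (fun i => μs (nk (j i)) ((· * x) ⁻¹' B))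
        Filter.atTop (nhds (μ ((· * x) ⁻¹' B))) := by
  classical
  have hP : ∀ n, IsProbabilityMeasure (μs (nk n)) := fun n => hμs (nk n)
  have hconv' : ∀ f : C(G, ℝ),
      Filter.Tendsto (fun n => ∫ x, f x ∂(μs (nk n))) Filter.atTop (nhds (∫ x, f x ∂μ)) :=
    fun f => (hconv f).comp hnk.tendsto_atTop
  -- measurability of the translated-measure functions
  have hmeas : ∀ (ν : Measure G) [SFinite ν], Measurable fun x => ν ((· * x) ⁻¹' B) := by
    intro ν _
    have hS : MeasurableSet {p : G × G | p.2 * p.1 ∈ B} :=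
      (measurable_snd.mul measurable_fst) hB
    exact measurable_measure_prodMk_left (ν := ν) hS
  set f : G → ℝ := fun x => (μ ((· * x) ⁻¹' B)).toReal with hf
  set fs : ℕ → G → ℝ := fun n x => (μs (nk n) ((· * x) ⁻¹' B)).toReal with hfs
  have hmeasf : Measurable f := (hmeas μ).ennreal_toReal
  have hmeasfs : ∀ n, Measurable (fs n) := fun n => by
    haveI := hP n; exact (hmeas (μs (nk n))).ennreal_toReal
  have habs : ∀ (ν : Measure G) [IsProbabilityMeasure ν] (x : G),
      |(ν ((· * x) ⁻¹' B)).toReal| ≤ 1 := by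
    intro ν _ x
    rw [abs_of_nonneg ENNReal.toReal_nonneg]
    have := ENNReal.toReal_mono ENNReal.one_ne_top (prob_le_one (μ := ν) (s := (· * x) ⁻¹' B))
    simpa using this
  have hbd : ∀ (g : G → ℝ) (C : ℝ), Measurable g → (∀ x, |g x| ≤ C) → Integrable g mG :=
    fun g C hg h =>
      (integrable_const C).mono' hg.aestronglyMeasurable
        (Filter.Eventually.of_forall fun x => by simpa [Real.norm_eq_abs] using h x)
  -- second moments
  have hTR : ∀ (ν ν' : Measure G) [IsProbabilityMeasure ν] [IsProbabilityMeasure ν'],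
      ∫ x, (ν ((· * x) ⁻¹' B)).toReal * (ν' ((· * x) ⁻¹' B)).toReal ∂mG
        = WeakStarAux.qq mG B ν ν' := by
    intro ν ν' _ _
    have key : ∫ x, ((ν ((· * x) ⁻¹' B)) * (ν' ((· * x) ⁻¹' B))).toReal ∂mG
        = (∫⁻ x, ν ((· * x) ⁻¹' B) * ν' ((· * x) ⁻¹' B) ∂mG).toReal :=
      integral_toReal (((hmeas ν).mul (hmeas ν')).aemeasurable)
        (Filter.Eventually.of_forall fun x =>
          ENNReal.mul_lt_top (measure_lt_top _ _) (measure_lt_top _ _))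
    calc ∫ x, (ν ((· * x) ⁻¹' B)).toReal * (ν' ((· * x) ⁻¹' B)).toReal ∂mG
        = ∫ x, ((ν ((· * x) ⁻¹' B)) * (ν' ((· * x) ⁻¹' B))).toReal ∂mG := by
          simp only [ENNReal.toReal_mul]
      _ = (∫⁻ x, ν ((· * x) ⁻¹' B) * ν' ((· * x) ⁻¹' B) ∂mG).toReal := key
      _ = WeakStarAux.qq mG B ν ν' := WeakStarAux.momentTR mG B hB ν ν'
  have e1 : ∀ n, ∫ x, fs n x * fs n x ∂mG
      = WeakStarAux.qq mG B (μs (nk n)) (μs (nk n)) := fun n => by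
    haveI := hP n; exact hTR (μs (nk n)) (μs (nk n))
  have e2 : ∀ n, ∫ x, fs n x * f x ∂mG = WeakStarAux.qq mG B (μs (nk n)) μ := fun n => by
    haveI := hP n; exact hTR (μs (nk n)) μ
  have e3 : ∫ x, f x * f x ∂mG = WeakStarAux.qq mG B μ μ := hTR μ μ
  -- expansion of the square
  have hexp : ∀ n, ∫ x, (fs n x - f x) ^ 2 ∂mG
      = WeakStarAux.qq mG B (μs (nk n)) (μs (nk n))
        - 2 * WeakStarAux.qq mG B (μs (nk n)) μ + WeakStarAux.qq mG B μ μ := by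
    intro n
    haveI := hP n
    have i1 : Integrable (fun x => fs n x * fs n x) mG :=
      hbd _ 1 ((hmeasfs n).mul (hmeasfs n)) fun x => by
        rw [abs_mul]
        exact mul_le_one₀ (habs _ x) (abs_nonneg _) (habs _ x)
    have i2 : Integrable (fun x => fs n x * f x) mG :=
      hbd _ 1 ((hmeasfs n).mul hmeasf) fun x => by
        rw [abs_mul]
        exact mul_le_one₀ (habs _ x) (abs_nonneg _) (habs _ x)
    have i3 : Integrable (fun x => f x * f x) mG :=
      hbd _ 1 (hmeasf.mul hmeasf) fun x => by
        rw [abs_mul]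
        exact mul_le_one₀ (habs _ x) (abs_nonneg _) (habs _ x)
    have i2' : Integrable (fun x => 2 * (fs n x * f x)) mG := i2.const_mul 2
    have i12 : Integrable (fun x => fs n x * fs n x - 2 * (fs n x * f x)) mG := i1.sub i2'
    have hring : (fun x => (fs n x - f x) ^ 2)
        = fun x => (fs n x * fs n x - 2 * (fs n x * f x)) + f x * f x := by
      funext x; ring
    rw [hring, integral_add i12 i3, integral_sub i1 i2', integral_const_mul, e1, e2, e3]
  -- convergence of the moments
  have h_b : Filter.Tendsto (fun n => WeakStarAux.qq mG B (μs (nk n)) μ) Filter.atTop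
      (nhds (WeakStarAux.qq mG B μ μ)) := by
    have h := hconv' ⟨WeakStarAux.phi mG B μ, WeakStarAux.phi_cont mG B hB μ⟩
    exact h
  have h_unif : TendstoUniformly (fun n => WeakStarAux.phi mG B (μs (nk n)))
      (WeakStarAux.phi mG B μ) Filter.atTop :=
    WeakStarAux.phi_unif mG B hB _ hP μ hconv'
  have h_diff : Filter.Tendsto
      (fun n => ∫ g, (WeakStarAux.phi mG B (μs (nk n)) g - WeakStarAux.phi mG B μ g)
        ∂(μs (nk n))) Filter.atTop (nhds 0) := by
    rw [Metric.tendsto_nhds]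
    intro ε hε
    have h2 := Metric.tendstoUniformly_iff.1 h_unif (ε / 2) (by positivity)
    filter_upwards [h2] with n hn
    haveI := hP n
    have hnorm : ‖∫ g, (WeakStarAux.phi mG B (μs (nk n)) g - WeakStarAux.phi mG B μ g)
        ∂(μs (nk n))‖ ≤ (ε / 2) * ((μs (nk n)) Set.univ).toReal := by
      refine norm_integral_le_of_norm_le_const (Filter.Eventually.of_forall fun g => ?_)
      rw [← dist_eq_norm, dist_comm]
      exact (hn g).le
    rw [Real.dist_eq, sub_zero]
    calc |∫ g, (WeakStarAux.phi mG B (μs (nk n)) g - WeakStarAux.phi mG B μ g) ∂(μs (nk n))|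
        ≤ (ε / 2) * ((μs (nk n)) Set.univ).toReal := hnorm
      _ = ε / 2 := by simp
      _ < ε := by linarith
  have h_a : Filter.Tendsto (fun n => WeakStarAux.qq mG B (μs (nk n)) (μs (nk n)))
      Filter.atTop (nhds (WeakStarAux.qq mG B μ μ)) := by
    have hsplit : ∀ n, WeakStarAux.qq mG B (μs (nk n)) (μs (nk n))
        = (∫ g, (WeakStarAux.phi mG B (μs (nk n)) g - WeakStarAux.phi mG B μ g) ∂(μs (nk n)))
          + ∫ g, WeakStarAux.phi mG B μ g ∂(μs (nk n)) := by
      intro n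
      haveI := hP n
      rw [integral_sub (WeakStarAux.cont_integrable _ (WeakStarAux.phi_cont mG B hB _))
        (WeakStarAux.cont_integrable _ (WeakStarAux.phi_cont mG B hB μ))]
      show (∫ g, WeakStarAux.phi mG B (μs (nk n)) g ∂(μs (nk n))) = _
      ring
    have h := h_diff.add h_b
    rw [zero_add] at h
    exact Filter.Tendsto.congr (fun n => (hsplit n).symm) h
  have hsq : Filter.Tendsto (fun n => ∫ x, (fs n x - f x) ^ 2 ∂mG) Filter.atTop (nhds 0) := by
    have hq : Filter.Tendsto (fun n => WeakStarAux.qq mG B (μs (nk n)) (μs (nk n))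
        - 2 * WeakStarAux.qq mG B (μs (nk n)) μ + WeakStarAux.qq mG B μ μ) Filter.atTop
        (nhds (WeakStarAux.qq mG B μ μ - 2 * WeakStarAux.qq mG B μ μ
          + WeakStarAux.qq mG B μ μ)) :=
      (h_a.sub (h_b.const_mul 2)).add tendsto_const_nhds
    have h0 : WeakStarAux.qq mG B μ μ - 2 * WeakStarAux.qq mG B μ μ
        + WeakStarAux.qq mG B μ μ = 0 := by ring
    rw [h0] at hq
    exact Filter.Tendsto.congr (fun n => (hexp n).symm) hq
  -- convergence in measure
  have hTIM : TendstoInMeasure mG fs Filter.atTop f := by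
    rw [tendstoInMeasure_iff_dist]
    intro ε hε
    have hDconv : Filter.Tendsto (fun n => ENNReal.ofReal (∫ x, (fs n x - f x) ^ 2 ∂mG))
        Filter.atTop (nhds 0) := by
      have := ENNReal.tendsto_ofReal hsq
      simpa using this
    set c : ℝ≥0∞ := ENNReal.ofReal (ε ^ 2) with hc
    have hc0 : c ≠ 0 := by
      rw [hc, Ne, ENNReal.ofReal_eq_zero, not_le]
      positivity
    have hcT : c ≠ ⊤ := ENNReal.ofReal_ne_top
    have hcinv : c⁻¹ ≠ ⊤ := by
      simp [ENNReal.inv_ne_top, hc0]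
    have hbound : ∀ n, mG {x | ε ≤ dist (fs n x) (f x)}
        ≤ c⁻¹ * ENNReal.ofReal (∫ x, (fs n x - f x) ^ 2 ∂mG) := by
      intro n
      have hmeasd : Measurable fun x => (fs n x - f x) ^ 2 :=
        ((hmeasfs n).sub hmeasf).pow_const 2
      haveI := hP n
      have hint : Integrable (fun x => (fs n x - f x) ^ 2) mG := by
        refine hbd _ 4 hmeasd fun x => ?_
        have h1 : |fs n x - f x| ≤ 2 := by
          have := habs (μs (nk n)) x
          have := habs μ x
          have h2 : |fs n x| ≤ 1 := habs (μs (nk n)) x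
          have h3 : |f x| ≤ 1 := habs μ x
          calc |fs n x - f x| ≤ |fs n x| + |f x| := abs_sub _ _
            _ ≤ 2 := by linarith
        calc |(fs n x - f x) ^ 2| = |fs n x - f x| ^ 2 := by rw [abs_pow]
          _ ≤ 2 ^ 2 := by
            exact pow_le_pow_left₀ (abs_nonneg _) h1 2
          _ = 4 := by norm_num
      have hlin : ENNReal.ofReal (∫ x, (fs n x - f x) ^ 2 ∂mG)
          = ∫⁻ x, ENNReal.ofReal ((fs n x - f x) ^ 2) ∂mG :=
        ofReal_integral_eq_lintegral_ofReal hint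
          (Filter.Eventually.of_forall fun x => sq_nonneg _)
      have hsubset : {x | ε ≤ dist (fs n x) (f x)}
          ⊆ {x | c ≤ ENNReal.ofReal ((fs n x - f x) ^ 2)} := by
        intro x hx
        simp only [Set.mem_setOf_eq] at hx ⊢
        have h1 : ε ≤ |fs n x - f x| := by rwa [Real.dist_eq] at hx
        have h2 : ε ^ 2 ≤ (fs n x - f x) ^ 2 := by
          calc ε ^ 2 ≤ |fs n x - f x| ^ 2 := pow_le_pow_left₀ hε.le h1 2
            _ = (fs n x - f x) ^ 2 := sq_abs _
        exact ENNReal.ofReal_le_ofReal h2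
      have hcheb := mul_meas_ge_le_lintegral₀
        ((ENNReal.measurable_ofReal.comp hmeasd).aemeasurable) (μ := mG) c
      calc mG {x | ε ≤ dist (fs n x) (f x)}
          ≤ mG {x | c ≤ ENNReal.ofReal ((fs n x - f x) ^ 2)} := measure_mono hsubset
        _ = c⁻¹ * (c * mG {x | c ≤ ENNReal.ofReal ((fs n x - f x) ^ 2)}) := by
            rw [← mul_assoc, ENNReal.inv_mul_cancel hc0 hcT, one_mul]
        _ ≤ c⁻¹ * ∫⁻ x, ENNReal.ofReal ((fs n x - f x) ^ 2) ∂mG :=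
            mul_le_mul_right hcheb _
        _ = c⁻¹ * ENNReal.ofReal (∫ x, (fs n x - f x) ^ 2 ∂mG) := by rw [hlin]
    have hlim : Filter.Tendsto (fun n => c⁻¹ * ENNReal.ofReal (∫ x, (fs n x - f x) ^ 2 ∂mG))
        Filter.atTop (nhds 0) := by
      have := ENNReal.Tendsto.const_mul hDconv (Or.inr hcinv)
      simpa using this
    exact tendsto_of_tendsto_of_tendsto_of_le_of_le tendsto_const_nhds hlim
      (fun n => bot_le) hbound
  obtain ⟨ns, hns, hae⟩ := hTIM.exists_seq_tendsto_ae
  refine ⟨ns, hns, ?_⟩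
  set T : Set G := {x | Filter.Tendsto (fun i => fs (ns i) x) Filter.atTop (nhds (f x))} with hT
  have hTc : mG Tᶜ = 0 := by
    have := hae
    rw [MeasureTheory.ae_iff] at this
    exact this
  refine ⟨(toMeasurable mG Tᶜ)ᶜ, (measurableSet_toMeasurable mG Tᶜ).compl, ?_, ?_⟩
  · rw [compl_compl, measure_toMeasurable]
    exact hTc
  · intro x hx
    have hxT : x ∈ T := by
      by_contra h
      exact hx (subset_toMeasurable mG Tᶜ h)
    have h1 : Filter.Tendsto (fun i => ENNReal.ofReal (fs (ns i) x)) Filter.atTop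
        (nhds (ENNReal.ofReal (f x))) := ENNReal.tendsto_ofReal hxT
    have h2 : ∀ i, ENNReal.ofReal (fs (ns i) x) = μs (nk (ns i)) ((· * x) ⁻¹' B) := fun i => by
      haveI := hP (ns i)
      exact ENNReal.ofReal_toReal (measure_ne_top _ _)
    have h3 : ENNReal.ofReal (f x) = μ ((· * x) ⁻¹' B) :=
      ENNReal.ofReal_toReal (measure_ne_top _ _)
    rw [← h3]
    exact Filter.Tendsto.congr h2 h1
end

section
/- Let G be a compact second countable group and suppose (N_k) is a decreasing sequence of closed subgroups of G with intersection N. Then for every Borel set B ⊆ G and every subsequence (n_k) there exist a further subsequence (n_{k_j}) and an m_G-conull Borel set X ⊆ G such that lim_{j→∞} (m_G)_x^{N_{k_j}}(B) = (m_G)_x^N(B) for all x ∈ X. -/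
open MeasureTheory Set Pointwise Function


section AuxConv
open Filter Topology
open scoped NNReal ENNReal

section AuxA
variable {H : Type*} [Group H] [TopologicalSpace H] [IsTopologicalGroup H] [CompactSpace H]
  [MeasurableSpace H] [BorelSpace H]

/-- Haar probability measure on a compact group is right invariant. -/
lemma haarProb_isMulRightInvariant (μ : Measure H) [μ.IsHaarMeasure]
    [IsProbabilityMeasure μ] : μ.IsMulRightInvariant := by
  constructor
  intro g
  have hmg : Measurable fun x : H => x * g := measurable_mul_const g
  set μ' := Measure.map (fun x => x * g) μ with hμ'
  haveI : IsProbabilityMeasure μ' := Measure.isProbabilityMeasure_map hmg.aemeasurable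
  haveI : μ'.IsMulLeftInvariant := by
    constructor
    intro h
    rw [hμ', Measure.map_map (measurable_const_mul h) hmg]
    have heq : ((fun x : H => h * x) ∘ fun x => x * g) = (fun x : H => x * g) ∘ (fun x => h * x) := by
      funext x; simp [mul_assoc]
    rw [heq, ← Measure.map_map hmg (measurable_const_mul h),
      MeasureTheory.map_mul_left_eq_self μ h]
  have h1 : μ' = Measure.haarScalarFactor μ' μ • μ :=
    Measure.isMulInvariant_eq_smul_of_compactSpace μ' μ
  have hc : Measure.haarScalarFactor μ' μ = 1 := by
    have h2 := congrArg (fun m : Measure H => m Set.univ) h1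
    simp only [Measure.smul_apply, measure_univ, smul_eq_mul, mul_one] at h2
    have h3 : ((μ'.haarScalarFactor μ : ℝ≥0) : ℝ≥0∞) = 1 := by
      simpa [ENNReal.smul_def, smul_eq_mul] using h2.symm
    exact_mod_cast h3
  rw [h1, hc, one_smul]

end AuxA

section AuxB
variable {G : Type*} [Group G] [TopologicalSpace G] [IsTopologicalGroup G] [CompactSpace G]
  [T2Space G] [SecondCountableTopology G] [MeasurableSpace G] [BorelSpace G]

/-- Decreasing closed subgroups with intersection inside an open set are eventually
inside that open set. -/
lemma eventually_subset_of_iInter_subset (Nseq : ℕ → Subgroup G)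
    (hclosed : ∀ k, IsClosed (Nseq k : Set G)) (hanti : Antitone Nseq)
    {U : Set G} (hU : IsOpen U) (hNU : (⋂ k, (Nseq k : Set G)) ⊆ U) :
    ∃ K : ℕ, ∀ k ≥ K, (Nseq k : Set G) ⊆ U := by
  have hcpt : IsCompact (Nseq 0 : Set G) := (hclosed 0).isCompact
  have hemp : (Nseq 0 : Set G) ∩ ⋂ k, ((Nseq k : Set G) ∩ Uᶜ) = ∅ := by
    apply Set.eq_empty_of_forall_notMem
    intro x hx
    have hx2 : x ∈ ⋂ k, ((Nseq k : Set G) ∩ Uᶜ) := hx.2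
    simp only [Set.mem_iInter, Set.mem_inter_iff] at hx2
    exact (hx2 0).2 (hNU (Set.mem_iInter.2 fun k => (hx2 k).1))
  obtain ⟨u, hu⟩ := hcpt.elim_finite_subfamily_closed _
    (fun k => (hclosed k).inter hU.isClosed_compl) hemp
  refine ⟨u.sup id + 1, fun k hk x hxk => ?_⟩
  by_contra hxU
  have hx0 : x ∈ (Nseq 0 : Set G) := hanti (Nat.zero_le k) hxk
  have : x ∈ (Nseq 0 : Set G) ∩ ⋂ i ∈ u, ((Nseq i : Set G) ∩ Uᶜ) := by
    refine ⟨hx0, Set.mem_iInter₂.2 fun i hi => ⟨?_, hxU⟩⟩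
    exact hanti (le_trans (le_trans (Finset.le_sup (f := id) hi) (Nat.le_succ _)) hk) hxk
  rw [hu] at this
  exact this

/-- Weak convergence of Haar probability measures of a decreasing sequence of
closed subgroups to the Haar probability measure of the intersection. -/
lemma tendsto_integral_haar_of_subgroups (Nseq : ℕ → Subgroup G)
    (hclosed : ∀ k, IsClosed (Nseq k : Set G)) (hanti : Antitone Nseq)
    (N : Subgroup G) (hNs : (N : Set G) = ⋂ k, (Nseq k : Set G))
    (μs : ∀ k, Measure ↥(Nseq k))
    (hμs : ∀ k, (μs k).IsHaarMeasure ∧ IsProbabilityMeasure (μs k))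
    (μN : Measure ↥N) [μN.IsHaarMeasure] [IsProbabilityMeasure μN]
    (φ : G → ℝ) (hφ : Continuous φ) :
    Tendsto (fun k => ∫ y, φ y ∂(Measure.map Subtype.val (μs k))) atTop
      (𝓝 (∫ y, φ y ∂(Measure.map Subtype.val μN))) := by
  -- basic instances
  haveI hNcl : IsClosed (N : Set G) := by
    rw [hNs]; exact isClosed_iInter fun k => hclosed k
  haveI : CompactSpace ↥N := isCompact_iff_compactSpace.mp hNcl.isCompact
  haveI : BorelSpace ↥N := Subtype.borelSpace (N : Set G)
  haveI : SecondCountableTopology ↥N := inferInstanceAs (SecondCountableTopology (N : Set G))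
  haveI : ∀ k, SecondCountableTopology ↥(Nseq k) :=
    fun k => inferInstanceAs (SecondCountableTopology ((Nseq k : Set G) : Set G))
  haveI : ∀ k, BorelSpace ↥(Nseq k) := fun k => Subtype.borelSpace ((Nseq k : Set G))
  haveI hcs : ∀ k, CompactSpace ↥(Nseq k) :=
    fun k => isCompact_iff_compactSpace.mp (hclosed k).isCompact
  haveI := fun k => (hμs k).1
  haveI := fun k => (hμs k).2
  haveI : μN.IsMulRightInvariant := haarProb_isMulRightInvariant μN
  have hNle : ∀ k, N ≤ Nseq k := by
    intro k x hx
    have : (x : G) ∈ ⋂ k, (Nseq k : Set G) := hNs ▸ hx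
    exact Set.mem_iInter.1 this k
  -- bound for φ
  obtain ⟨C, hC⟩ : ∃ C, ∀ z ∈ Set.univ, ‖φ z‖ ≤ C :=
    isCompact_univ.exists_bound_of_continuousOn hφ.continuousOn
  have hC' : ∀ z : G, ‖φ z‖ ≤ C := fun z => hC z (Set.mem_univ z)
  -- the averaged function g
  set c : ℝ := ∫ m : ↥N, φ (m : G) ∂μN with hc
  have hcval : ∫ y, φ y ∂(Measure.map Subtype.val μN) = c := by
    rw [integral_map continuous_subtype_val.measurable.aemeasurable
      hφ.aestronglyMeasurable]
  set g : G → ℝ := fun x => ∫ m : ↥N, φ ((m : G) * x) ∂μN with hg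
  have hg_cont : Continuous g := by
    apply continuous_of_dominated (bound := fun _ => C)
    · exact fun x => (hφ.comp (continuous_subtype_val.mul continuous_const)).aestronglyMeasurable
    · exact fun x => Filter.Eventually.of_forall fun m => hC' _
    · exact integrable_const C
    · exact Filter.Eventually.of_forall fun m =>
        hφ.comp (continuous_const.mul continuous_id)
  have hgN : ∀ n : ↥N, g (n : G) = c := by
    intro n
    have : g (n : G) = ∫ m : ↥N, (fun m' : ↥N => φ (m' : G)) (m * n) ∂μN := by
      simp [hg]
    rw [this, integral_mul_right_eq_self (fun m' : ↥N => φ (m' : G)) n]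
  rw [hcval]
  rw [Metric.tendsto_atTop]
  intro ε hε
  -- the open set where g is close to c
  set U : Set G := {x | dist (g x) c < ε / 2} with hU
  have hUopen : IsOpen U := isOpen_lt (hg_cont.dist continuous_const) continuous_const
  have hNU : (⋂ k, (Nseq k : Set G)) ⊆ U := by
    rw [← hNs]
    intro x hx
    have : g x = c := hgN ⟨x, hx⟩
    simp [hU, this, hε]
  obtain ⟨K, hK⟩ := eventually_subset_of_iInter_subset Nseq hclosed hanti hUopen hNU
  refine ⟨K, fun k hk => ?_⟩
  -- A = ∫ g dν_k equals ∫ φ dν_k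
  have hint : Integrable (Function.uncurry fun (n : ↥(Nseq k)) (m : ↥N) =>
      φ ((m : G) * (n : G))) ((μs k).prod μN) := by
    have hcont : Continuous (Function.uncurry fun (n : ↥(Nseq k)) (m : ↥N) =>
        φ ((m : G) * (n : G))) := by
      have h2 : Continuous (fun p : ↥(Nseq k) × ↥N => φ ((p.2 : G) * (p.1 : G))) :=
        hφ.comp ((continuous_subtype_val.comp continuous_snd).mul
          (continuous_subtype_val.comp continuous_fst))
      exact h2
    exact ⟨hcont.aestronglyMeasurable,
      HasFiniteIntegral.of_bounded (C := C) (Filter.Eventually.of_forall fun p => hC' _)⟩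
  have hswap : ∫ n : ↥(Nseq k), g (n : G) ∂(μs k)
      = ∫ m : ↥N, ∫ n : ↥(Nseq k), φ ((m : G) * (n : G)) ∂(μs k) ∂μN :=
    integral_integral_swap hint
  have hinner : ∀ m : ↥N, ∫ n : ↥(Nseq k), φ ((m : G) * (n : G)) ∂(μs k)
      = ∫ n : ↥(Nseq k), φ (n : G) ∂(μs k) := by
    intro m
    have hmem : (m : G) ∈ Nseq k := hNle k m.2
    have h1 : ∀ n : ↥(Nseq k), φ ((m : G) * (n : G))
        = (fun n' : ↥(Nseq k) => φ (n' : G)) ((⟨(m : G), hmem⟩ : ↥(Nseq k)) * n) := by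
      intro n; rfl
    simp_rw [h1]
    exact integral_mul_left_eq_self (fun n' : ↥(Nseq k) => φ (n' : G)) _
  have hA : ∫ n : ↥(Nseq k), g (n : G) ∂(μs k) = ∫ n : ↥(Nseq k), φ (n : G) ∂(μs k) := by
    rw [hswap]
    simp_rw [hinner]
    simp
  -- now estimate
  have hgsub : ∀ n : ↥(Nseq k), ‖g (n : G) - c‖ ≤ ε / 2 := by
    intro n
    have : (n : G) ∈ U := hK k hk n.2
    simp only [hU, Set.mem_setOf_eq, Real.dist_eq] at this
    exact le_of_lt this
  have hgint : Integrable (fun n : ↥(Nseq k) => g ((n : G))) (μs k) :=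
    (hg_cont.comp continuous_subtype_val).integrable_of_hasCompactSupport
      (HasCompactSupport.of_compactSpace _)
  have hsub : ∫ n : ↥(Nseq k), g (n : G) ∂(μs k) - c
      = ∫ n : ↥(Nseq k), (g (n : G) - c) ∂(μs k) := by
    rw [integral_sub hgint (integrable_const c), integral_const]
    simp
  have hest : ‖∫ n : ↥(Nseq k), g (n : G) ∂(μs k) - c‖ ≤ ε / 2 := by
    rw [hsub]
    calc ‖∫ n : ↥(Nseq k), (g (n : G) - c) ∂(μs k)‖
        ≤ (ε / 2) * ((μs k) Set.univ).toReal :=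
          norm_integral_le_of_norm_le_const (Filter.Eventually.of_forall hgsub)
      _ = ε / 2 := by simp
  have hval : ∫ y, φ y ∂(Measure.map Subtype.val (μs k))
      = ∫ n : ↥(Nseq k), φ (n : G) ∂(μs k) :=
    integral_map continuous_subtype_val.measurable.aemeasurable hφ.aestronglyMeasurable
  rw [hval, Real.dist_eq, ← hA]
  exact lt_of_le_of_lt hest (by linarith)

lemma aux_integrable_of_bound {α : Type*} [MeasurableSpace α] (μ : Measure α)
    [IsFiniteMeasure μ] {f : α → ℝ} (hf : AEStronglyMeasurable f μ) (C : ℝ)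
    (h : ∀ x, ‖f x‖ ≤ C) : Integrable f μ :=
  ⟨hf, HasFiniteIntegral.of_bounded (Filter.Eventually.of_forall h)⟩

lemma aux_sm (ρ : Measure G) [SFinite ρ] {u : G → ℝ} (hu : Measurable u) :
    StronglyMeasurable (fun x => ∫ y, u (y * x) ∂ρ) := by
  have : StronglyMeasurable (fun p : G × G => u (p.2 * p.1)) :=
    (hu.comp (measurable_snd.mul measurable_fst)).stronglyMeasurable
  exact this.integral_prod_right'

lemma aux_L1_bound (mG : Measure G) [IsProbabilityMeasure mG] [mG.IsMulLeftInvariant]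
    (ρ : Measure G) [IsProbabilityMeasure ρ] {u : G → ℝ} (hu : Measurable u) {C : ℝ}
    (hC : ∀ z, ‖u z‖ ≤ C) :
    ∫ x, ‖∫ y, u (y * x) ∂ρ‖ ∂mG ≤ ∫ z, ‖u z‖ ∂mG := by
  have smT := aux_sm ρ hu
  have smTa : StronglyMeasurable (fun x => ∫ y, ‖u (y * x)‖ ∂ρ) := aux_sm ρ hu.norm
  have hbnd1 : ∀ x : G, ‖∫ y, u (y * x) ∂ρ‖ ≤ C := by
    intro x
    have := norm_integral_le_of_norm_le_const (μ := ρ) (C := C)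
      (Filter.Eventually.of_forall fun y => hC (y * x))
    simpa using this
  have hbnd2 : ∀ x : G, ‖∫ y, ‖u (y * x)‖ ∂ρ‖ ≤ C := by
    intro x
    have hb : ∀ y : G, ‖‖u (y * x)‖‖ ≤ C := fun y => by rw [norm_norm]; exact hC _
    have := norm_integral_le_of_norm_le_const (μ := ρ) (C := C)
      (Filter.Eventually.of_forall hb)
    simpa using this
  have iL : Integrable (fun x => ‖∫ y, u (y * x) ∂ρ‖) mG :=
    aux_integrable_of_bound mG smT.norm.aestronglyMeasurable C
      (fun x => by rw [norm_norm]; exact hbnd1 x)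
  have iR : Integrable (fun x => ∫ y, ‖u (y * x)‖ ∂ρ) mG :=
    aux_integrable_of_bound mG smTa.aestronglyMeasurable C hbnd2
  have hswap : ∫ x, ∫ y, ‖u (y * x)‖ ∂ρ ∂mG = ∫ y, ∫ x, ‖u (y * x)‖ ∂mG ∂ρ := by
    apply integral_integral_swap
    refine ⟨((hu.comp (measurable_snd.mul measurable_fst)).norm).aestronglyMeasurable, ?_⟩
    exact HasFiniteIntegral.of_bounded (C := C)
      (Filter.Eventually.of_forall fun p => by
        simp only [Function.uncurry, norm_norm]; exact hC _)
  calc ∫ x, ‖∫ y, u (y * x) ∂ρ‖ ∂mG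
      ≤ ∫ x, ∫ y, ‖u (y * x)‖ ∂ρ ∂mG :=
        integral_mono iL iR fun x => norm_integral_le_integral_norm _
    _ = ∫ y, ∫ x, ‖u (y * x)‖ ∂mG ∂ρ := hswap
    _ = ∫ y : G, (∫ z, ‖u z‖ ∂mG) ∂ρ := by
        apply integral_congr_ae
        exact Filter.Eventually.of_forall fun y =>
          integral_mul_left_eq_self (fun z => ‖u z‖) y
    _ = ∫ z, ‖u z‖ ∂mG := by simp

end AuxB
end AuxConv

open Filter Topology
open scoped NNReal ENNReal

/-- Corollary `conv subgroups`: for a decreasing sequence of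
closed subgroups `N_k` with intersection `N`, every Borel set `B` and every
subsequence admit a further subsequence along which `(m_G)_x^{N_k}(B) → (m_G)_x^N(B)`
for Haar-almost every `x`. -/
theorem fiber_measures_of_decreasing_subgroups_converge
    {G : Type*} [Group G] [TopologicalSpace G] [IsTopologicalGroup G] [CompactSpace G]
    [SecondCountableTopology G] [T2Space G] [MeasurableSpace G] [BorelSpace G]
    (mG : Measure G) [mG.IsHaarMeasure] [IsProbabilityMeasure mG]
    (Nseq : ℕ → Subgroup G) (hclosed : ∀ k, IsClosed (Nseq k : Set G))
    (hdec : ∀ k, Nseq (k + 1) ≤ Nseq k)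
    (N : Subgroup G) (hN : N = ⨅ k, Nseq k)
    (μs : ∀ k, Measure ↥(Nseq k))
    (hμs : ∀ k, (μs k).IsHaarMeasure ∧ IsProbabilityMeasure (μs k))
    (μN : Measure ↥N) [μN.IsHaarMeasure] [IsProbabilityMeasure μN]
    (B : Set G) (hB : MeasurableSet B) (nk : ℕ → ℕ) (hnk : StrictMono nk) :
    ∃ j : ℕ → ℕ, StrictMono j ∧ ∃ X : Set G, MeasurableSet X ∧ mG Xᶜ = 0 ∧
      ∀ x ∈ X,
        Filter.Tendsto (fun i => fiberMeasure (Nseq (nk (j i))) (μs (nk (j i))) x B)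
          Filter.atTop (nhds (fiberMeasure N μN x B)) := by
  classical
  -- instances and basic facts
  have hanti : Antitone Nseq := antitone_nat_of_succ_le hdec
  have hNs : (N : Set G) = ⋂ k, (Nseq k : Set G) := by
    rw [hN]; exact Subgroup.coe_iInf
  haveI := fun k => (hμs k).2
  haveI : BorelSpace ↥N := Subtype.borelSpace (N : Set G)
  haveI : ∀ k, BorelSpace ↥(Nseq k) := fun k => Subtype.borelSpace ((Nseq k : Set G))
  -- the pushforward measures on G
  set ν : ℕ → Measure G := fun k => Measure.map Subtype.val (μs k) with hν
  set ν' : Measure G := Measure.map Subtype.val μN with hν'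
  haveI : ∀ k, IsProbabilityMeasure (ν k) := fun k =>
    Measure.isProbabilityMeasure_map continuous_subtype_val.measurable.aemeasurable
  haveI : IsProbabilityMeasure ν' :=
    Measure.isProbabilityMeasure_map continuous_subtype_val.measurable.aemeasurable
  -- the indicator function
  set w : G → ℝ := B.indicator (fun _ => (1 : ℝ)) with hw
  have hwmeas : Measurable w := measurable_const.indicator hB
  have hwb : ∀ z, ‖w z‖ ≤ 1 := by
    intro z
    by_cases hz : z ∈ B <;> simp [hw, Set.indicator_of_mem, Set.indicator_of_notMem, hz]
  have hwnn : ∀ z, 0 ≤ w z := fun z => Set.indicator_nonneg (fun _ _ => zero_le_one) z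
  -- integral representations
  have key1 : ∀ (ρ : Measure G) (x : G),
      ∫ y, w (y * x) ∂ρ = (ρ ((fun y => y * x) ⁻¹' B)).toReal := by
    intro ρ x
    have h1 : ∀ y : G, w (y * x)
        = ((fun y => y * x) ⁻¹' B).indicator (fun _ => (1 : ℝ)) y := by
      intro y
      rw [hw]
      exact (Set.indicator_comp_right (fun y : G => y * x)
        (s := B) (g := fun _ => (1:ℝ)) (x := y)).symm
    simp_rw [h1]
    rw [integral_indicator_const (1 : ℝ) ((measurable_mul_const x) hB)]
    simp [Measure.real]
  have key2 : ∀ k x, fiberMeasure (Nseq k) (μs k) x B = ν k ((fun y => y * x) ⁻¹' B) := by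
    intro k x
    show Measure.map (fun n : ↥(Nseq k) => (n : G) * x) (μs k) B = _
    have hcomp : (fun n : ↥(Nseq k) => (n : G) * x) = (fun y : G => y * x) ∘ Subtype.val := rfl
    rw [hcomp, ← Measure.map_map (measurable_mul_const x) measurable_subtype_coe,
      Measure.map_apply (measurable_mul_const x) hB]
  have key2' : ∀ x, fiberMeasure N μN x B = ν' ((fun y => y * x) ⁻¹' B) := by
    intro x
    show Measure.map (fun n : ↥N => (n : G) * x) μN B = _
    have hcomp : (fun n : ↥N => (n : G) * x) = (fun y : G => y * x) ∘ Subtype.val := rfl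
    rw [hcomp, ← Measure.map_map (measurable_mul_const x) measurable_subtype_coe,
      Measure.map_apply (measurable_mul_const x) hB]
  -- the real-valued fiber functions
  set F : ℕ → G → ℝ := fun k x => ∫ y, w (y * x) ∂(ν k) with hF
  set F' : G → ℝ := fun x => ∫ y, w (y * x) ∂ν' with hF'
  -- measurability and integrability of everything in sight
  have hsmF : ∀ k, StronglyMeasurable (F k) := fun k => aux_sm (ν k) hwmeas
  have hsmF' : StronglyMeasurable F' := aux_sm ν' hwmeas
  have hFb : ∀ k x, ‖F k x‖ ≤ 1 := by
    intro k x
    have := norm_integral_le_of_norm_le_const (μ := ν k) (C := 1)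
      (Filter.Eventually.of_forall fun y => hwb (y * x))
    simpa using this
  have hF'b : ∀ x, ‖F' x‖ ≤ 1 := by
    intro x
    have := norm_integral_le_of_norm_le_const (μ := ν') (C := 1)
      (Filter.Eventually.of_forall fun y => hwb (y * x))
    simpa using this
  -- the L¹ distances
  set DD : ℕ → ℝ := fun k => ∫ x, ‖F k x - F' x‖ ∂mG with hDDdef
  have hDiffInt : ∀ k, Integrable (fun x => F k x - F' x) mG := fun k =>
    aux_integrable_of_bound mG ((hsmF k).sub hsmF').aestronglyMeasurable 2
      (fun x => (norm_sub_le _ _).trans (by linarith [hFb k x, hF'b x]))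
  -- main step : DD tends to zero
  have hL1 : Tendsto DD atTop (𝓝 0) := by
    rw [Metric.tendsto_atTop]
    intro ε hε
    -- regularity: approximate B by K ⊆ B ⊆ U
    obtain ⟨U, hBU, hUopen, hUlt⟩ := B.exists_isOpen_lt_add (μ := mG)
      (measure_ne_top mG B) (ε := ENNReal.ofReal (ε / 8))
      (by simp [ENNReal.ofReal_eq_zero]; linarith)
    obtain ⟨K, hKB, hKcpt, hKlt⟩ := hB.exists_isCompact_lt_add (μ := mG)
      (measure_ne_top mG B) (ε := ENNReal.ofReal (ε / 8))
      (by simp [ENNReal.ofReal_eq_zero]; linarith)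
    have hUB : mG (U \ B) < ENNReal.ofReal (ε / 8) :=
      measure_diff_lt_of_lt_add hB.nullMeasurableSet hBU (measure_ne_top mG B) hUlt
    have hBK : mG (B \ K) < ENNReal.ofReal (ε / 8) :=
      measure_diff_lt_of_lt_add hKcpt.isClosed.measurableSet.nullMeasurableSet hKB
        (measure_ne_top mG K) hKlt
    have hUK : mG (U \ K) < ENNReal.ofReal (ε / 4) := by
      have hsub : U \ K ⊆ (U \ B) ∪ (B \ K) := by
        intro z hz
        by_cases hzB : z ∈ B
        · exact Or.inr ⟨hzB, hz.2⟩
        · exact Or.inl ⟨hz.1, hzB⟩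
      calc mG (U \ K) ≤ mG ((U \ B) ∪ (B \ K)) := measure_mono hsub
        _ ≤ mG (U \ B) + mG (B \ K) := measure_union_le _ _
        _ < ENNReal.ofReal (ε / 8) + ENNReal.ofReal (ε / 8) := by
            exact ENNReal.add_lt_add hUB hBK
        _ = ENNReal.ofReal (ε / 4) := by
            rw [← ENNReal.ofReal_add (by linarith) (by linarith)]
            congr 1
            ring
    have hUKr : (mG (U \ K)).toReal < ε / 4 := by
      have h8 : mG (U \ K) ≠ ∞ := measure_ne_top _ _
      rw [← ENNReal.lt_ofReal_iff_toReal_lt h8]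
      exact hUK
    -- Urysohn function
    obtain ⟨f, hf0, hf1, hf01⟩ := exists_continuous_zero_one_of_isClosed
      (hUopen.isClosed_compl) hKcpt.isClosed
      (by rw [Set.disjoint_compl_left_iff_subset]; exact hKB.trans hBU)
    set φ : G → ℝ := ⇑f with hφdef
    have hφcont : Continuous φ := f.continuous
    have hφmeas : Measurable φ := hφcont.measurable
    have hφ01 : ∀ z, 0 ≤ φ z ∧ φ z ≤ 1 := fun z => ⟨(hf01 z).1, (hf01 z).2⟩
    -- pointwise bound |w - φ| ≤ 1_{U \ K}
    set u : G → ℝ := fun z => w z - φ z with hu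
    have humeas : Measurable u := hwmeas.sub hφmeas
    have hub2 : ∀ z, ‖u z‖ ≤ 2 := by
      intro z
      have h1 := abs_le.1 (by simpa [Real.norm_eq_abs] using hwb z)
      have h2 := (hφ01 z).1
      have h3 := (hφ01 z).2
      have hz : u z = w z - φ z := rfl
      rw [hz, Real.norm_eq_abs, abs_sub_le_iff]
      exact ⟨by linarith [h1.1, h1.2], by linarith [h1.1, h1.2]⟩
    have hupt : ∀ z, ‖u z‖ ≤ (U \ K).indicator (fun _ => (1 : ℝ)) z := by
      intro z
      by_cases hzK : z ∈ K
      · have h1 : w z = 1 := by rw [hw]; simp [Set.indicator_of_mem (hKB hzK)]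
        have h2 : φ z = 1 := hf1 hzK
        simp [hu, h1, h2, Set.indicator_nonneg]
      · by_cases hzU : z ∈ U
        · have : z ∈ U \ K := ⟨hzU, hzK⟩
          rw [Set.indicator_of_mem this]
          have h1 := abs_le.1 (by simpa [Real.norm_eq_abs] using hwb z)
          have h2 := (hφ01 z).1
          have h3 := (hφ01 z).2
          have hz : u z = w z - φ z := rfl
          rw [hz, Real.norm_eq_abs, abs_sub_le_iff]
          exact ⟨by linarith [h1.1, h1.2], by linarith [h1.1, h1.2, hwnn z]⟩
        · have h1 : w z = 0 := by
            rw [hw]; exact Set.indicator_of_notMem (fun hzB => hzU (hBU hzB)) _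
          have h2 : φ z = 0 := hf0 hzU
          have : z ∉ U \ K := fun h => hzU h.1
          rw [Set.indicator_of_notMem this]
          simp [hu, h1, h2]
    have huL1 : ∫ z, ‖u z‖ ∂mG < ε / 4 := by
      have hind : ∫ z, (U \ K).indicator (fun _ => (1 : ℝ)) z ∂mG
          = (mG (U \ K)).toReal := by
        rw [integral_indicator_const (1 : ℝ) (hUopen.measurableSet.diff
          hKcpt.isClosed.measurableSet)]
        simp [Measure.real]
      have hmono : ∫ z, ‖u z‖ ∂mG ≤ ∫ z, (U \ K).indicator (fun _ => (1 : ℝ)) z ∂mG := by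
        apply integral_mono
        · exact aux_integrable_of_bound mG humeas.norm.aestronglyMeasurable 2
            (fun z => by rw [norm_norm]; exact hub2 z)
        · exact aux_integrable_of_bound mG
            ((measurable_const.indicator (hUopen.measurableSet.diff
              hKcpt.isClosed.measurableSet)).aestronglyMeasurable) 1
            (fun z => by
              by_cases hz : z ∈ U \ K <;>
                simp [Set.indicator_of_mem, Set.indicator_of_notMem, hz])
        · exact hupt
      exact lt_of_le_of_lt (hmono.trans (le_of_eq hind)) hUKr
    -- the middle terms : parametrized integrals of φ
    set P : ℕ → G → ℝ := fun k x => ∫ y, φ (y * x) ∂(ν k) with hP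
    set P' : G → ℝ := fun x => ∫ y, φ (y * x) ∂ν' with hP'
    have hsmP : ∀ k, StronglyMeasurable (P k) := fun k => aux_sm (ν k) hφmeas
    have hsmP' : StronglyMeasurable P' := aux_sm ν' hφmeas
    have hPb : ∀ k x, ‖P k x‖ ≤ 1 := by
      intro k x
      have := norm_integral_le_of_norm_le_const (μ := ν k) (C := 1)
        (Filter.Eventually.of_forall fun y => by
          rw [Real.norm_eq_abs, abs_le]
          exact ⟨by linarith [(hφ01 (y*x)).1], (hφ01 (y*x)).2⟩)
      simpa using this
    have hP'b : ∀ x, ‖P' x‖ ≤ 1 := by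
      intro x
      have := norm_integral_le_of_norm_le_const (μ := ν') (C := 1)
        (Filter.Eventually.of_forall fun y => by
          rw [Real.norm_eq_abs, abs_le]
          exact ⟨by linarith [(hφ01 (y*x)).1], (hφ01 (y*x)).2⟩)
      simpa using this
    -- pointwise convergence of middle term
    have hmidpt : ∀ x, Tendsto (fun k => P k x) atTop (𝓝 (P' x)) := by
      intro x
      exact tendsto_integral_haar_of_subgroups Nseq hclosed hanti N hNs μs hμs μN
        (fun y => φ (y * x)) (hφcont.comp (continuous_mul_right x))
    set Mid : ℕ → ℝ := fun k => ∫ x, ‖P k x - P' x‖ ∂mG with hMid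
    have hmid : Tendsto Mid atTop (𝓝 0) := by
      have h0 : (0 : ℝ) = ∫ (_ : G), (0 : ℝ) ∂mG := by simp
      rw [hMid, h0]
      apply tendsto_integral_of_dominated_convergence (fun _ => (2 : ℝ))
      · exact fun k => ((hsmP k).sub hsmP').norm.aestronglyMeasurable
      · exact integrable_const 2
      · intro k
        apply Filter.Eventually.of_forall
        intro x
        rw [norm_norm]
        exact (norm_sub_le _ _).trans (by linarith [hPb k x, hP'b x])
      · apply Filter.Eventually.of_forall
        intro x
        have := ((hmidpt x).sub (tendsto_const_nhds (x := P' x))).norm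
        rw [sub_self, norm_zero] at this
        exact this
    -- choose K₀ for the middle term
    rw [Metric.tendsto_atTop] at hmid
    obtain ⟨K₀, hK₀⟩ := hmid (ε / 4) (by linarith)
    refine ⟨K₀, fun k hk => ?_⟩
    -- triangle inequality estimate for DD k
    have hsplit : ∀ (ρ : Measure G) (_ : IsProbabilityMeasure ρ) (x : G),
        (∫ y, w (y * x) ∂ρ) - (∫ y, φ (y * x) ∂ρ) = ∫ y, u (y * x) ∂ρ := by
      intro ρ hρ x
      rw [← integral_sub]
      · exact aux_integrable_of_bound ρ
          ((hwmeas.comp (measurable_mul_const x)).aestronglyMeasurable) 1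
          (fun y => hwb _)
      · exact aux_integrable_of_bound ρ
          ((hφmeas.comp (measurable_mul_const x)).aestronglyMeasurable) 1
          (fun y => by
            rw [Real.norm_eq_abs, abs_le]
            exact ⟨by linarith [(hφ01 (y*x)).1], (hφ01 (y*x)).2⟩)
    have htri : ∀ x, ‖F k x - F' x‖
        ≤ ‖∫ y, u (y * x) ∂(ν k)‖ + (‖P k x - P' x‖ + ‖∫ y, u (y * x) ∂ν'‖) := by
      intro x
      have hiden : F k x - F' x
          = (F k x - P k x) + ((P k x - P' x) + (P' x - F' x)) := by ring
      rw [hiden]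
      refine (norm_add_le _ _).trans ?_
      gcongr
      · rw [show F k x - P k x = ∫ y, u (y * x) ∂(ν k) from
          hsplit (ν k) inferInstance x]
      · refine (norm_add_le _ _).trans ?_
        gcongr
        rw [show P' x - F' x = -(∫ y, u (y * x) ∂ν') by
          rw [← hsplit ν' inferInstance x]; ring, norm_neg]
    -- integrate the triangle inequality
    have hintu : ∀ (ρ : Measure G) (_ : IsProbabilityMeasure ρ),
        Integrable (fun x => ‖∫ y, u (y * x) ∂ρ‖) mG := by
      intro ρ hρ
      refine aux_integrable_of_bound mG (aux_sm ρ humeas).norm.aestronglyMeasurable 2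
        (fun x => ?_)
      rw [norm_norm]
      have := norm_integral_le_of_norm_le_const (μ := ρ) (C := 2)
        (Filter.Eventually.of_forall fun y => hub2 (y * x))
      simpa using this
    have hintP : Integrable (fun x => ‖P k x - P' x‖) mG := by
      refine aux_integrable_of_bound mG
        ((hsmP k).sub hsmP').norm.aestronglyMeasurable 2 ?_
      intro x
      rw [norm_norm]
      exact (norm_sub_le _ _).trans (by linarith [hPb k x, hP'b x])
    have hDDle : DD k ≤ (∫ x, ‖∫ y, u (y * x) ∂(ν k)‖ ∂mG)
        + ((∫ x, ‖P k x - P' x‖ ∂mG) + (∫ x, ‖∫ y, u (y * x) ∂ν'‖ ∂mG)) := by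
      rw [hDDdef]
      calc ∫ x, ‖F k x - F' x‖ ∂mG
          ≤ ∫ x, (‖∫ y, u (y * x) ∂(ν k)‖
              + (‖P k x - P' x‖ + ‖∫ y, u (y * x) ∂ν'‖)) ∂mG := by
            apply integral_mono ((hDiffInt k).norm)
            · exact ((hintu (ν k) inferInstance).add
                (hintP.add (hintu ν' inferInstance)))
            · exact htri
        _ = _ := by
            have hgi : Integrable
                (fun x => ‖P k x - P' x‖ + ‖∫ y, u (y * x) ∂ν'‖) mG :=
              hintP.add (hintu ν' inferInstance)
            rw [integral_add (hintu (ν k) inferInstance) hgi,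
              integral_add hintP (hintu ν' inferInstance)]
    have hterm1 : ∫ x, ‖∫ y, u (y * x) ∂(ν k)‖ ∂mG ≤ ∫ z, ‖u z‖ ∂mG :=
      aux_L1_bound mG (ν k) humeas hub2
    have hterm3 : ∫ x, ‖∫ y, u (y * x) ∂ν'‖ ∂mG ≤ ∫ z, ‖u z‖ ∂mG :=
      aux_L1_bound mG ν' humeas hub2
    have hterm2 : ∫ x, ‖P k x - P' x‖ ∂mG < ε / 4 := by
      have := hK₀ k hk
      rw [Real.dist_eq] at this
      have hMnn : 0 ≤ Mid k := integral_nonneg (fun x => norm_nonneg _)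
      rw [abs_of_nonneg (by linarith [hMnn] : (0:ℝ) ≤ Mid k - 0)] at this
      · simpa [hMid] using (by linarith [this] : Mid k < ε / 4)
    have hDDnn : 0 ≤ DD k := integral_nonneg (fun x => norm_nonneg _)
    rw [Real.dist_eq, abs_of_nonneg (by linarith : (0:ℝ) ≤ DD k - 0)]
    have : DD k < ε / 4 + (ε / 4 + ε / 4) := by
      calc DD k ≤ _ := hDDle
        _ < ε / 4 + (ε / 4 + ε / 4) :=
          add_lt_add (lt_of_le_of_lt hterm1 huL1)
            (add_lt_add hterm2 (lt_of_le_of_lt hterm3 huL1))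
    linarith
  -- pass to the subsequence nk and convert to eLpNorm convergence
  have hL1nk : Tendsto (fun i => DD (nk i)) atTop (𝓝 0) :=
    hL1.comp hnk.tendsto_atTop
  have heLp : Tendsto (fun i => eLpNorm (F (nk i) - F') 1 mG) atTop (𝓝 0) := by
    have heq : ∀ k, eLpNorm (F k - F') 1 mG = ENNReal.ofReal (DD k) := by
      intro k
      rw [eLpNorm_one_eq_lintegral_enorm]
      simp only [Pi.sub_apply]
      rw [← ofReal_integral_norm_eq_lintegral_enorm (hDiffInt k)]
    simp_rw [heq]
    have h5 := ENNReal.tendsto_ofReal hL1nk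
    simpa using h5
  have hTIM : TendstoInMeasure mG (fun i => F (nk i)) atTop F' :=
    tendstoInMeasure_of_tendsto_eLpNorm one_ne_zero
      (fun i => (hsmF (nk i)).aestronglyMeasurable) hsmF'.aestronglyMeasurable heLp
  obtain ⟨j, hjmono, hae⟩ := hTIM.exists_seq_tendsto_ae
  refine ⟨j, hjmono, ?_⟩
  -- build the conull measurable set
  set S : Set G := {x | Tendsto (fun i => F (nk (j i)) x) atTop (𝓝 (F' x))} with hS
  have hSc : mG Sᶜ = 0 := by
    exact hae
  refine ⟨(toMeasurable mG Sᶜ)ᶜ, (measurableSet_toMeasurable mG Sᶜ).compl, ?_, ?_⟩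
  · rw [compl_compl, measure_toMeasurable]
    exact hSc
  · intro x hx
    have hxS : x ∈ S := by
      by_contra hxS
      exact hx (subset_toMeasurable mG Sᶜ hxS)
    have hxt : Tendsto (fun i => F (nk (j i)) x) atTop (𝓝 (F' x)) := hxS
    -- convert to ℝ≥0∞ convergence
    have hrw : ∀ i, F (nk (j i)) x = (ν (nk (j i)) ((fun y => y * x) ⁻¹' B)).toReal :=
      fun i => key1 (ν (nk (j i))) x
    have hrw' : F' x = (ν' ((fun y => y * x) ⁻¹' B)).toReal := key1 ν' x
    rw [key2']
    have hfin : ∀ i, ν (nk (j i)) ((fun y => y * x) ⁻¹' B) ≠ ∞ :=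
      fun i => measure_ne_top _ _
    have hfin' : ν' ((fun y => y * x) ⁻¹' B) ≠ ∞ := measure_ne_top _ _
    have hx2 : Tendsto (fun i => ν (nk (j i)) ((fun y => y * x) ⁻¹' B)) atTop
        (𝓝 (ν' ((fun y => y * x) ⁻¹' B))) := by
      rw [← ENNReal.tendsto_toReal_iff hfin hfin']
      simp_rw [← hrw, ← hrw']
      exact hxt
    simp_rw [key2]
    exact hx2
end

section
/- Let G be a compact group with Haar probability measure m_G and suppose p : G → 𝕋 is a continuous surjective homomorphism. Let I, J ⊆ 𝕋 be closed intervals of positive length, and let A and B be Borel subsets of G with A conull in p⁻¹(I) and B conull in p⁻¹(J) (i.e. A ⊆ p⁻¹(I) with m_G(p⁻¹(I) \ A) = 0, and similarly for B). Then m_G(A) = m_𝕋(I), m_G(B) = m_𝕋(J), and (A,B) is a critical pair in G: m_G(AB) = min(1, m_G(A) + m_G(B)). -/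
open MeasureTheory Set Pointwise Function

lemma my_addCircle_image_Icc (x r : ℝ) (h0 : 0 ≤ r) :
    ((↑) : ℝ → AddCircle (2 * Real.pi)) '' Set.Icc (x - r) (x + r)
      = Metric.closedBall ((x : ℝ) : AddCircle (2 * Real.pi)) r := by
  set T := 2 * Real.pi with hTdef
  have hT0 : (0:ℝ) < T := by positivity
  ext z
  simp only [Metric.mem_closedBall, Set.mem_image]
  constructor
  · rintro ⟨y, hy, rfl⟩
    have h1 : dist ((y : ℝ) : AddCircle T) ((x : ℝ) : AddCircle T)
        = ‖((y - x : ℝ) : AddCircle T)‖ := by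
      rw [dist_eq_norm]
      norm_cast
    rw [h1]
    calc ‖((y - x : ℝ) : AddCircle T)‖ ≤ ‖(y - x : ℝ)‖ := QuotientAddGroup.norm_mk_le_norm
      _ ≤ r := by
          rw [Real.norm_eq_abs, abs_le]
          exact ⟨by linarith [hy.1], by linarith [hy.2]⟩
  · intro hz
    obtain ⟨w, rfl⟩ := QuotientAddGroup.mk_surjective z
    set n : ℤ := round (T⁻¹ * (w - x)) with hn
    have h2 : ‖((w - x : ℝ) : AddCircle T)‖ = |(w - x) - round (T⁻¹ * (w - x)) * T| := AddCircle.norm_eq T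
    have h3 : |w - x - n * T| ≤ r := by
      rw [← h2]
      have : dist ((w : ℝ) : AddCircle T) ((x : ℝ) : AddCircle T)
          = ‖((w - x : ℝ) : AddCircle T)‖ := by
        rw [dist_eq_norm]; norm_cast
      rw [← this]; exact hz
    rw [abs_le] at h3
    refine ⟨x + (w - x - n * T), ⟨by linarith [h3.1], by linarith [h3.2]⟩, ?_⟩
    have hmem : ((n : ℝ) * T) ∈ AddSubgroup.zmultiples T := by
      exact ⟨n, by simp [zsmul_eq_mul]⟩
    have h4 : ((x + (w - x - n * T) : ℝ) : AddCircle T) = ((w - n * T : ℝ) : AddCircle T) := by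
      congr 1; ring
    rw [h4]
    have h5 : ((n * T : ℝ) : AddCircle T) = 0 := (QuotientAddGroup.eq_zero_iff _).2 hmem
    rw [sub_eq_add_neg, QuotientAddGroup.mk_add, QuotientAddGroup.mk_neg, h5, neg_zero, add_zero]

lemma my_addCircle_volume_Icc {u v : ℝ} (huv : u ≤ v) :
    haveI : Fact (0 < 2 * Real.pi) := ⟨by positivity⟩
    (volume : Measure (AddCircle (2 * Real.pi))) (((↑) : ℝ → AddCircle (2 * Real.pi)) '' Set.Icc u v)
      = ENNReal.ofReal (min (2 * Real.pi) (v - u)) := by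
  haveI : Fact (0 < 2 * Real.pi) := ⟨by positivity⟩
  have h1 : Set.Icc u v = Set.Icc ((u+v)/2 - (v-u)/2) ((u+v)/2 + (v-u)/2) := by
    congr 1 <;> ring
  rw [h1, my_addCircle_image_Icc _ _ (by linarith), AddCircle.volume_closedBall]
  congr 1
  rw [mul_div_cancel₀]
  norm_num

lemma my_homeo_add (a b : AddCircle (2 * Real.pi)) :
    AddCircle.homeomorphCircle' (a + b)
      = AddCircle.homeomorphCircle' a * AddCircle.homeomorphCircle' b :=
  Real.Angle.toCircle_add a b

lemma my_exp_image_Icc_univ (u : ℝ) :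
    ⇑Circle.exp '' Set.Icc u (u + 2 * Real.pi) = Set.univ := by
  apply Set.eq_univ_of_forall
  intro z
  obtain ⟨w, hw, hwz⟩ : ∃ w ∈ Set.Ioc u (u + 2*Real.pi), ((w:ℝ) : AddCircle (2*Real.pi)) = ((Complex.arg z : ℝ) : AddCircle (2*Real.pi)) := by
    haveI : Fact (0 < 2 * Real.pi) := ⟨by positivity⟩
    have := AddCircle.coe_image_Ioc_eq (2 * Real.pi) u
    have hz : ((Complex.arg z : ℝ) : AddCircle (2*Real.pi)) ∈ (((↑) : ℝ → AddCircle (2*Real.pi)) '' Set.Ioc u (u + 2*Real.pi)) := by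
      rw [this]; trivial
    obtain ⟨w, hw1, hw2⟩ := hz
    exact ⟨w, hw1, hw2⟩
  refine ⟨w, Set.Ioc_subset_Icc_self hw, ?_⟩
  have : Circle.exp w = Circle.exp (Complex.arg z) := by
    have := congrArg (AddCircle.homeomorphCircle') hwz
    rwa [AddCircle.homeomorphCircle'_apply_mk, AddCircle.homeomorphCircle'_apply_mk] at this
  rw [this, Circle.exp_arg]

lemma my_arc_measure (mT : Measure Circle) [mT.IsHaarMeasure] [IsProbabilityMeasure mT]
    {u v : ℝ} (huv : u ≤ v) :
    mT (⇑Circle.exp '' Set.Icc u v)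
      = ENNReal.ofReal (min (2 * Real.pi) (v - u)) / ENNReal.ofReal (2 * Real.pi) := by
  haveI : Fact (0 < 2 * Real.pi) := ⟨by positivity⟩
  have hT0 : (0:ℝ) < 2 * Real.pi := by positivity
  rcases le_or_gt (v - u) (2 * Real.pi) with hvu | hvu
  · -- main case
    set e : AddCircle (2 * Real.pi) ≃ₜ Circle := AddCircle.homeomorphCircle' with he
    set ν : Measure (AddCircle (2 * Real.pi)) := Measure.map e.symm mT with hν
    haveI hν1 : IsProbabilityMeasure ν :=
      Measure.isProbabilityMeasure_map e.symm.continuous.measurable.aemeasurable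
    have hinv : ν.IsAddLeftInvariant := by
      constructor
      intro g
      have hcomp : (fun z => g + z) ∘ ⇑e.symm = ⇑e.symm ∘ (fun z => e g * z) := by
        funext z
        apply e.injective
        rw [Function.comp_apply, Function.comp_apply, my_homeo_add, e.apply_symm_apply,
          e.apply_symm_apply]
      rw [hν, Measure.map_map (by exact (continuous_const.add continuous_id).measurable)
          e.symm.continuous.measurable, hcomp,
        ← Measure.map_map e.symm.continuous.measurable
          (by exact (continuous_const.mul continuous_id).measurable),
        map_mul_left_eq_self]
    haveI hν2 : ν.IsAddHaarMeasure :=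
      { toIsAddLeftInvariant := hinv
        lt_top_of_isCompact := fun _K _hK => measure_lt_top ν _
        toIsOpenPosMeasure := e.symm.continuous.isOpenPosMeasure_map e.symm.surjective }
    set μ0 : Measure (AddCircle (2 * Real.pi)) :=
      (ENNReal.ofReal (2 * Real.pi))⁻¹ • (volume : Measure (AddCircle (2 * Real.pi))) with hμ0
    have hc0 : ENNReal.ofReal (2 * Real.pi) ≠ 0 := (ENNReal.ofReal_pos.2 hT0).ne'
    have hctop : ENNReal.ofReal (2 * Real.pi) ≠ ⊤ := ENNReal.ofReal_ne_top
    haveI hμ01 : μ0.IsAddHaarMeasure :=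
      Measure.IsAddHaarMeasure.smul _ (ENNReal.inv_ne_zero.2 hctop) (ENNReal.inv_ne_top.2 hc0)
    haveI hμ02 : IsProbabilityMeasure μ0 := by
      constructor
      rw [hμ0, Measure.smul_apply, AddCircle.measure_univ, smul_eq_mul,
        ENNReal.inv_mul_cancel hc0 hctop]
    have hve : ν = μ0 := Measure.isAddHaarMeasure_eq_of_isProbabilityMeasure ν μ0
    have hcont : Continuous ((↑) : ℝ → AddCircle (2 * Real.pi)) := continuous_quotient_mk'
    have hmkmeas : MeasurableSet (((↑) : ℝ → AddCircle (2 * Real.pi)) '' Set.Icc u v) :=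
      ((isCompact_Icc.image hcont).isClosed).measurableSet
    have him : ⇑Circle.exp '' Set.Icc u v
        = ⇑e.symm ⁻¹' (((↑) : ℝ → AddCircle (2 * Real.pi)) '' Set.Icc u v) := by
      rw [Homeomorph.preimage_symm, Set.image_image]
      rfl
    rw [him, ← Measure.map_apply e.symm.continuous.measurable hmkmeas, ← hν, hve, hμ0,
      Measure.smul_apply, my_addCircle_volume_Icc huv, smul_eq_mul,
      ENNReal.div_eq_inv_mul]
  · -- degenerate: arc covers everything
    have hsub : ⇑Circle.exp '' Set.Icc u (u + 2 * Real.pi) ⊆ ⇑Circle.exp '' Set.Icc u v :=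
      Set.image_mono (Set.Icc_subset_Icc_right (by linarith))
    have huniv : ⇑Circle.exp '' Set.Icc u v = Set.univ :=
      Set.eq_univ_of_subset hsub (my_exp_image_Icc_univ u)
    rw [huniv, measure_univ, min_eq_left hvu.le,
      ENNReal.div_self ((ENNReal.ofReal_pos.2 hT0).ne') ENNReal.ofReal_ne_top]

lemma my_haar_inv_invariant {G : Type*} [Group G] [TopologicalSpace G] [IsTopologicalGroup G]
    [CompactSpace G] [T2Space G] [MeasurableSpace G] [BorelSpace G]
    (mG : Measure G) [mG.IsHaarMeasure] [IsProbabilityMeasure mG] : mG.IsInvInvariant := by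
  haveI : mG.IsMulRightInvariant := by
    constructor
    intro g
    haveI : IsProbabilityMeasure (Measure.map (· * g) mG) :=
      Measure.isProbabilityMeasure_map (continuous_id.mul continuous_const).measurable.aemeasurable
    exact Measure.isHaarMeasure_eq_of_isProbabilityMeasure _ _
  constructor
  haveI : IsProbabilityMeasure mG.inv := by
    constructor
    rw [Measure.inv_apply]
    simp
  haveI : mG.inv.IsHaarMeasure :=
    { toIsMulLeftInvariant := inferInstance
      lt_top_of_isCompact := fun _K _hK => measure_lt_top _ _
      toIsOpenPosMeasure := ⟨fun U hU hne => by
        rw [Measure.inv_apply]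
        exact hU.inv.measure_ne_zero mG hne.inv⟩ }
  exact Measure.isHaarMeasure_eq_of_isProbabilityMeasure _ _

/-- conull subsets of pullbacks of closed intervals under a
continuous surjective homomorphism onto the circle form a critical pair. -/
theorem conull_interval_pullbacks_critical
    {G : Type*} [Group G] [TopologicalSpace G] [IsTopologicalGroup G] [CompactSpace G]
    [T2Space G] [MeasurableSpace G] [BorelSpace G]
    (mG : Measure G) [mG.IsHaarMeasure] [IsProbabilityMeasure mG]
    (mT : Measure Circle) [mT.IsHaarMeasure] [IsProbabilityMeasure mT]
    (p : G →* Circle) (hpc : Continuous p) (hps : Function.Surjective p)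
    (I J : Set Circle) (hI : IsClosedArc I) (hJ : IsClosedArc J)
    (hIpos : 0 < mT I) (hJpos : 0 < mT J)
    (A B : Set G) (hAmeas : MeasurableSet A) (hBmeas : MeasurableSet B)
    (hAI : A ⊆ ⇑p ⁻¹' I) (hAco : mG (⇑p ⁻¹' I \ A) = 0)
    (hBJ : B ⊆ ⇑p ⁻¹' J) (hBco : mG (⇑p ⁻¹' J \ B) = 0) :
    mG A = mT I ∧ mG B = mT J ∧ mG (A * B) = min 1 (mG A + mG B) := by
  obtain ⟨a, b, hab, habT, hIeq⟩ := hI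
  obtain ⟨c, d, hcd, hcdT, hJeq⟩ := hJ
  have hπ : (0:ℝ) < 2 * Real.pi := by positivity
  set κ := ENNReal.ofReal (2 * Real.pi) with hκ
  have hκ0 : κ ≠ 0 := (ENNReal.ofReal_pos.2 hπ).ne'
  have hκtop : κ ≠ ⊤ := ENNReal.ofReal_ne_top
  have hmap : Measure.map (⇑p) mG = mT := by
    haveI : (Measure.map (⇑p) mG).IsHaarMeasure :=
      Measure.isHaarMeasure_map_of_isFiniteMeasure mG p hpc hps
    haveI : IsProbabilityMeasure (Measure.map (⇑p) mG) :=
      Measure.isProbabilityMeasure_map hpc.measurable.aemeasurable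
    exact Measure.isHaarMeasure_eq_of_isProbabilityMeasure _ _
  have hpre : ∀ S : Set Circle, MeasurableSet S → mG (⇑p ⁻¹' S) = mT S := by
    intro S hS
    rw [← hmap, Measure.map_apply hpc.measurable hS]
  have harcmeas : ∀ u v : ℝ, MeasurableSet (⇑Circle.exp '' Set.Icc u v) := fun u v =>
    ((isCompact_Icc.image Circle.exp.continuous).isClosed).measurableSet
  have hIm : MeasurableSet I := hIeq ▸ harcmeas a b
  have hJm : MeasurableSet J := hJeq ▸ harcmeas c d
  have hAeq : mG A = mT I := by
    apply le_antisymm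
    · rw [← hpre I hIm]; exact measure_mono hAI
    · rw [← hpre I hIm]
      calc mG (⇑p ⁻¹' I) ≤ mG (A ∪ (⇑p ⁻¹' I \ A)) := measure_mono (by
            intro x hx
            by_cases h : x ∈ A
            exacts [Or.inl h, Or.inr ⟨hx, h⟩])
        _ ≤ mG A + mG (⇑p ⁻¹' I \ A) := measure_union_le _ _
        _ = mG A := by rw [hAco, add_zero]
  have hBeq : mG B = mT J := by
    apply le_antisymm
    · rw [← hpre J hJm]; exact measure_mono hBJ
    · rw [← hpre J hJm]
      calc mG (⇑p ⁻¹' J) ≤ mG (B ∪ (⇑p ⁻¹' J \ B)) := measure_mono (by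
            intro x hx
            by_cases h : x ∈ B
            exacts [Or.inl h, Or.inr ⟨hx, h⟩])
        _ ≤ mG B + mG (⇑p ⁻¹' J \ B) := measure_union_le _ _
        _ = mG B := by rw [hBco, add_zero]
  have hL1 : 0 < b - a := by
    by_contra h
    push_neg at h
    have h0 : b - a = 0 := le_antisymm h (by linarith)
    rw [hIeq, my_arc_measure mT hab, h0, min_eq_right hπ.le] at hIpos
    simp at hIpos
  have hL2 : 0 < d - c := by
    by_contra h
    push_neg at h
    have h0 : d - c = 0 := le_antisymm h (by linarith)
    rw [hJeq, my_arc_measure mT hcd, h0, min_eq_right hπ.le] at hJpos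
    simp at hJpos
  have hIval : mT I = ENNReal.ofReal (b - a) / κ := by
    rw [hIeq, my_arc_measure mT hab, min_eq_right habT]
  have hJval : mT J = ENNReal.ofReal (d - c) / κ := by
    rw [hJeq, my_arc_measure mT hcd, min_eq_right hcdT]
  have hsing : ∀ z : Circle, mT {z} = 0 := by
    intro z
    have hz : ({z} : Set Circle) = ⇑Circle.exp '' Set.Icc (Complex.arg z) (Complex.arg z) := by
      rw [Set.Icc_self, Set.image_singleton, Circle.exp_arg]
    rw [hz, my_arc_measure mT le_rfl]
    simp
  have hub : mG (A * B) ≤ ENNReal.ofReal (min (2*Real.pi) ((b + d) - (a + c))) / κ := by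
    have hsub : A * B ⊆ ⇑p ⁻¹' (⇑Circle.exp '' Set.Icc (a + c) (b + d)) := by
      rintro z hz
      rw [Set.mem_mul] at hz
      obtain ⟨g, hg, h, hh, rfl⟩ := hz
      have hgI := hAI hg
      have hhJ := hBJ hh
      rw [Set.mem_preimage, hIeq] at hgI
      rw [Set.mem_preimage, hJeq] at hhJ
      obtain ⟨s, hs, hgs⟩ := hgI
      obtain ⟨t, ht, hht⟩ := hhJ
      refine Set.mem_preimage.2 ⟨s + t, ⟨by linarith [hs.1, ht.1], by linarith [hs.2, ht.2]⟩, ?_⟩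
      rw [Circle.exp_add, hgs, hht, map_mul]
    calc mG (A * B) ≤ mG (⇑p ⁻¹' (⇑Circle.exp '' Set.Icc (a + c) (b + d))) := measure_mono hsub
      _ = _ := by rw [hpre _ (harcmeas _ _), my_arc_measure mT (by linarith)]
  haveI := my_haar_inv_invariant mG
  have key : ∀ x : G, (∃ θ ∈ Set.Ioo (a + c) (b + d), Circle.exp θ = p x) → x ∈ A * B := by
    rintro x ⟨θ, hθ, hθx⟩
    obtain ⟨hθ1, hθ2⟩ := hθ
    have h1 : max a (θ - d) < min b (θ - c) := by
      apply max_lt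
      · exact lt_min (by linarith) (by linarith)
      · exact lt_min (by linarith) (by linarith)
    set u' := max a (θ - d) with hu'
    set v' := min b (θ - c) with hv'
    set D : Set G := ⇑p ⁻¹' J \ B with hD
    set W : Set G := ⇑p ⁻¹' (⇑Circle.exp '' Set.Icc u' v')
        \ ((⇑p ⁻¹' I \ A) ∪ x • D⁻¹) with hW
    have hDnull : mG (x • D⁻¹) = 0 := by
      have h2 : x • D⁻¹ = (fun y => x⁻¹ * y) ⁻¹' D⁻¹ := by
        ext y
        simp [Set.mem_smul_set_iff_inv_smul_mem]
      rw [h2, measure_preimage_mul, mG.measure_inv]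
      exact hBco
    have hWpos : 0 < mG W := by
      have h3 : mG W = mG (⇑p ⁻¹' (⇑Circle.exp '' Set.Icc u' v')) :=
        measure_diff_null (measure_union_null hAco hDnull)
      rw [h3, hpre _ (harcmeas _ _), my_arc_measure mT h1.le]
      exact ENNReal.div_pos (ENNReal.ofReal_pos.2 (lt_min hπ (by linarith))).ne' hκtop
    obtain ⟨g, hg1, hg2⟩ := nonempty_of_measure_ne_zero hWpos.ne'
    rw [Set.mem_preimage] at hg1
    obtain ⟨s, hs, hgs⟩ := hg1
    have hsa : a ≤ s := le_trans (le_max_left _ _) hs.1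
    have hsd : θ - d ≤ s := le_trans (le_max_right _ _) hs.1
    have hsb : s ≤ b := le_trans hs.2 (min_le_left _ _)
    have hsc : s ≤ θ - c := le_trans hs.2 (min_le_right _ _)
    rw [Set.mem_union, not_or] at hg2
    obtain ⟨hg2A, hg2B⟩ := hg2
    have hgA : g ∈ A := by
      by_contra hga
      exact hg2A ⟨Set.mem_preimage.2 (by rw [hIeq]; exact ⟨s, ⟨hsa, hsb⟩, hgs⟩), hga⟩
    have hexp : Circle.exp (θ - s) = (Circle.exp s)⁻¹ * Circle.exp θ := by
      rw [eq_inv_mul_iff_mul_eq, ← Circle.exp_add]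
      congr 1
      ring
    have hph : p (g⁻¹ * x) ∈ J := by
      rw [hJeq, map_mul, map_inv, ← hθx, ← hgs]
      exact ⟨θ - s, ⟨by linarith, by linarith⟩, hexp⟩
    have hhB : g⁻¹ * x ∈ B := by
      by_contra hb
      apply hg2B
      refine ⟨(g⁻¹ * x)⁻¹, ?_, ?_⟩
      · rw [Set.mem_inv, inv_inv]
        exact ⟨Set.mem_preimage.2 hph, hb⟩
      · show x * (g⁻¹ * x)⁻¹ = g
        group
    exact Set.mem_mul.2 ⟨g, hgA, g⁻¹ * x, hhB, by group⟩
  set v₁ := min (b + d) (a + c + 2 * Real.pi) with hv₁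
  have hv₁1 : a + c ≤ v₁ := le_min (by linarith) (by linarith)
  have hM : ⇑p ⁻¹' (⇑Circle.exp '' Set.Icc (a+c) v₁)
      \ (⇑p ⁻¹' {Circle.exp (a+c)} ∪ ⇑p ⁻¹' {Circle.exp v₁}) ⊆ A * B := by
    rintro z ⟨hz1, hz2⟩
    rw [Set.mem_preimage] at hz1
    obtain ⟨t, ht, htz⟩ := hz1
    rw [Set.mem_union, not_or] at hz2
    apply key z
    refine ⟨t, ⟨?_, ?_⟩, htz⟩
    · rcases eq_or_lt_of_le ht.1 with h | h
      · exact absurd (Set.mem_preimage.2 (by rw [← htz, ← h]; rfl)) hz2.1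
      · exact h
    · have htv : t < v₁ := by
        rcases eq_or_lt_of_le ht.2 with h | h
        · exact absurd (Set.mem_preimage.2 (by rw [← htz, h]; rfl)) hz2.2
        · exact h
      exact lt_of_lt_of_le htv (min_le_left _ _)
  have hlb : ENNReal.ofReal (min (2*Real.pi) ((b+d) - (a+c))) / κ ≤ mG (A * B) := by
    have h5 : mG (⇑p ⁻¹' (⇑Circle.exp '' Set.Icc (a+c) v₁)
        \ (⇑p ⁻¹' {Circle.exp (a+c)} ∪ ⇑p ⁻¹' {Circle.exp v₁}))
        = ENNReal.ofReal (min (2*Real.pi) (v₁ - (a+c))) / κ := by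
      rw [measure_diff_null, hpre _ (harcmeas _ _), my_arc_measure mT hv₁1]
      apply measure_union_null <;>
        · rw [hpre _ (measurableSet_singleton _)]
          exact hsing _
    have h6 : min (2*Real.pi) (v₁ - (a+c)) = min (2*Real.pi) ((b+d) - (a+c)) := by
      rcases le_total (b+d) (a+c+2*Real.pi) with h | h
      · rw [hv₁, min_eq_left h]
      · rw [hv₁, min_eq_right h, min_eq_left (by linarith), min_eq_left (by linarith)]
    rw [← h6, ← h5]
    exact measure_mono hM
  have hABval : mG (A * B) = ENNReal.ofReal (min (2*Real.pi) ((b+d)-(a+c))) / κ :=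
    le_antisymm hub hlb
  refine ⟨hAeq, hBeq, ?_⟩
  rw [hABval, hAeq, hBeq, hIval, hJval]
  have hsum : ENNReal.ofReal (b-a) / κ + ENNReal.ofReal (d-c) / κ
      = ENNReal.ofReal ((b+d) - (a+c)) / κ := by
    rw [ENNReal.div_add_div_same, ← ENNReal.ofReal_add (by linarith) (by linarith)]
    congr 2
    ring
  rw [hsum]
  rcases le_total ((b+d) - (a+c)) (2*Real.pi) with h | h
  · rw [min_eq_right h, eq_comm, min_eq_right]
    exact ENNReal.div_le_of_le_mul (by rw [one_mul]; exact ENNReal.ofReal_le_ofReal h)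
  · rw [min_eq_left h, hκ, ENNReal.div_self hκ0 hκtop, eq_comm, min_eq_left]
    rw [ENNReal.le_div_iff_mul_le (Or.inl hκ0) (Or.inl hκtop), one_mul, hκ]
    exact ENNReal.ofReal_le_ofReal h
end
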